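/- arXiv:1606.00129 — 4 statements merged into one kernel-verified Lean document; each statement's English description precedes it below -/
import Mathlib

section
/- Let X be a geodesic metric space, e ∈ X a basepoint, and N a Morse gauge. Then the subset X^(N)_e, with the metric induced from X, is 8N(3,0)-hyperbolic in the four-point sense: for all w,x,y,z ∈ X^(N)_e one has (x·y)_w ≥ min{(x·z)_w, (z·y)_w} − 8N(3,0); moreover, when the basepoint is e itself, the constant 4N(3,0) suffices: for all x,y,z ∈ X^(N)_e, (x·y)_e ≥ min{(x·z)_e, (z·y)_e} − 4N(3,0). -/
open Set Filter

section Defs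

variable {X : Type*} [MetricSpace X]

/-- A geodesic segment of length `L`, parametrized by arc length on `[0, L]`. -/
def IsGeodesicSeg (γ : ℝ → X) (L : ℝ) : Prop :=
  0 ≤ L ∧ ∀ s ∈ Icc (0:ℝ) L, ∀ t ∈ Icc (0:ℝ) L, dist (γ s) (γ t) = |s - t|

/-- A geodesic from `x` to `y`, parametrized by arc length on `[0, dist x y]`. -/
def IsGeodesicFromTo (γ : ℝ → X) (x y : X) : Prop :=
  IsGeodesicSeg γ (dist x y) ∧ γ 0 = x ∧ γ (dist x y) = y

/-- A geodesic ray, parametrized by arc length on `[0, ∞)`. -/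
def IsGeodesicRay (ℓ : ℝ → X) : Prop :=
  ∀ s ∈ Ici (0:ℝ), ∀ t ∈ Ici (0:ℝ), dist (ℓ s) (ℓ t) = |s - t|

/-- A geodesic metric space: any two points are joined by a geodesic. -/
def GeodesicSpace (X : Type*) [MetricSpace X] : Prop :=
  ∀ x y : X, ∃ γ : ℝ → X, IsGeodesicFromTo γ x y

/-- A `(K, C)`-quasi-geodesic defined on the interval `I ⊆ ℝ`. -/
def IsQuasiGeodesicOn (K C : ℝ) (I : Set ℝ) (σ : ℝ → X) : Prop :=
  ∀ s ∈ I, ∀ t ∈ I,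
    |s - t| / K - C ≤ dist (σ s) (σ t) ∧ dist (σ s) (σ t) ≤ K * |s - t| + C

/-- A Morse gauge: a nonnegative real `N K C` for every `K ≥ 1`, `C ≥ 0`. -/
def IsMorseGauge (N : ℝ → ℝ → ℝ) : Prop :=
  ∀ K C : ℝ, 1 ≤ K → 0 ≤ C → 0 ≤ N K C

/-- A subset `G ⊆ X` is `N`-Morse if for all `K ≥ 1`, `C ≥ 0`, every
`(K,C)`-quasi-geodesic with endpoints on `G` is contained in the closed
`N K C`-neighbourhood of `G`. -/
def IsMorseSet (N : ℝ → ℝ → ℝ) (G : Set X) : Prop :=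
  ∀ K C : ℝ, 1 ≤ K → 0 ≤ C → ∀ a b : ℝ, a ≤ b → ∀ σ : ℝ → X,
    IsQuasiGeodesicOn K C (Icc a b) σ → σ a ∈ G → σ b ∈ G →
    ∀ s ∈ Icc a b, ∃ g ∈ G, dist (σ s) g ≤ N K C

/-- An `N`-Morse geodesic from `x` to `y`. -/
def IsMorseGeodesicFromTo (N : ℝ → ℝ → ℝ) (γ : ℝ → X) (x y : X) : Prop :=
  IsGeodesicFromTo γ x y ∧ IsMorseSet N (γ '' Icc 0 (dist x y))

/-- An `N`-Morse geodesic ray. -/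
def IsMorseRay (N : ℝ → ℝ → ℝ) (ℓ : ℝ → X) : Prop :=
  IsGeodesicRay ℓ ∧ IsMorseSet N (ℓ '' Ici 0)

/-- The stratum `X^(N)_e`: points joined to `e` by an `N`-Morse geodesic. -/
def morseStratum (N : ℝ → ℝ → ℝ) (e : X) : Set X :=
  {y | ∃ γ : ℝ → X, IsMorseGeodesicFromTo N γ e y}

/-- The Gromov product `(x·y)_w`. -/
noncomputable def gprod (w x y : X) : ℝ := (dist w x + dist w y - dist x y) / 2

/-- A `B`-quasi-convex subset: geodesics with endpoints in `Y` stay in the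
closed `B`-neighbourhood of `Y`. -/
def IsQuasiConvex (B : ℝ) (Y : Set X) : Prop :=
  ∀ x ∈ Y, ∀ y ∈ Y, ∀ γ : ℝ → X, IsGeodesicFromTo γ x y →
    ∀ s ∈ Icc (0:ℝ) (dist x y), ∃ g ∈ Y, dist (γ s) g ≤ B

/-- An `N`-stable subset: quasi-convex, and any two of its points are joined
by an `N`-Morse geodesic of `X`. -/
def IsStableSubset (N : ℝ → ℝ → ℝ) (Y : Set X) : Prop :=
  (∃ B : ℝ, 0 ≤ B ∧ IsQuasiConvex B Y) ∧
    ∀ x ∈ Y, ∀ y ∈ Y, ∃ γ : ℝ → X, IsMorseGeodesicFromTo N γ x y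

variable {Y : Type*} [MetricSpace Y]

/-- A `(K,C)`-quasi-isometric embedding. -/
def IsQIEmbedding (K C : ℝ) (q : X → Y) : Prop :=
  ∀ x x' : X,
    dist x x' / K - C ≤ dist (q x) (q x') ∧ dist (q x) (q x') ≤ K * dist x x' + C

/-- A `(K,C)`-quasi-isometry. -/
def IsQuasiIsometry (K C : ℝ) (q : X → Y) : Prop :=
  IsQIEmbedding K C q ∧ ∀ y : Y, ∃ x : X, dist y (q x) ≤ C

end Defs

section Boundary

variable {X : Type*} [MetricSpace X]

/-- A sequence converges at infinity with respect to the basepoint `e`. -/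
def ConvAtInf (e : X) (f : ℕ → X) : Prop :=
  Tendsto (fun p : ℕ × ℕ => gprod e (f p.1) (f p.2)) atTop atTop

/-- Two sequences converging at infinity are equivalent. -/
def EquivAtInf (e : X) (f g : ℕ → X) : Prop :=
  Tendsto (fun p : ℕ × ℕ => gprod e (f p.1) (g p.2)) atTop atTop

/-- Sequences in `S` converging at infinity. -/
abbrev BSeq (S : Set X) (e : X) : Type _ :=
  {f : ℕ → X // (∀ n, f n ∈ S) ∧ ConvAtInf e f}

/-- The sequential boundary of `S ⊆ X` with basepoint `e`: sequences in `S`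
converging at infinity, up to equivalence. -/
def SeqBoundary (S : Set X) (e : X) : Type _ :=
  Quot (fun f g : BSeq S e => EquivAtInf e f.1 g.1)

/-- The boundary point represented by a convergent sequence. -/
def SeqBoundary.mk {S : Set X} {e : X} (f : BSeq S e) : SeqBoundary S e :=
  Quot.mk _ f

/-- The liminf of Gromov products of two sequences, valued in `EReal`. -/
noncomputable def seqGP (e : X) (f g : ℕ → X) : EReal :=
  Filter.liminf (fun p : ℕ × ℕ => ((gprod e (f p.1) (g p.2) : ℝ) : EReal)) atTop

/-- The Gromov product of two boundary points: the supremum over representing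
sequences of the liminf of Gromov products. -/
noncomputable def bGP (S : Set X) (e : X) (ξ η : SeqBoundary S e) : EReal :=
  sSup {r : EReal | ∃ f g : BSeq S e,
    SeqBoundary.mk f = ξ ∧ SeqBoundary.mk g = η ∧ r = seqGP e f.1 g.1}

open Classical in
/-- `exp (−ε·r)` for an extended real `r`, with value `0` at `r = ⊤`. -/
noncomputable def visGauge (ε : ℝ) (r : EReal) : ℝ :=
  if r = ⊤ then 0 else Real.exp (-ε * r.toReal)

/-- `d` is a visual metric on the sequential boundary of `S`:
a metric comparable to `exp(−ε·(Gromov product))` for some parameter `ε > 0`. -/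
def IsVisualMetric (S : Set X) (e : X)
    (d : SeqBoundary S e → SeqBoundary S e → ℝ) : Prop :=
  (∀ ξ η, 0 ≤ d ξ η) ∧ (∀ ξ η, d ξ η = d η ξ) ∧
  (∀ ξ η ζ, d ξ ζ ≤ d ξ η + d η ζ) ∧ (∀ ξ η, d ξ η = 0 ↔ ξ = η) ∧
  ∃ ε : ℝ, 0 < ε ∧ ∃ k₁ : ℝ, 0 < k₁ ∧ ∃ k₂ : ℝ, 0 < k₂ ∧
    ∀ ξ η, k₁ * visGauge ε (bGP S e ξ η) ≤ d ξ η ∧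
      d ξ η ≤ k₂ * visGauge ε (bGP S e ξ η)

/-- `η` is (the restriction of) a self-homeomorphism of `[0,∞)`. -/
def IsHomeoIci (η : ℝ → ℝ) : Prop :=
  ContinuousOn η (Ici 0) ∧ StrictMonoOn η (Ici 0) ∧ η 0 = 0 ∧
    Tendsto η atTop atTop ∧ ∀ t ∈ Ici (0:ℝ), 0 ≤ η t

/-- `F` is a quasi-symmetry onto its image, for the "distances" `dA`, `dB`. -/
def IsQuasiSymmetryOnto {A B : Type*} (dA : A → A → ℝ) (dB : B → B → ℝ)
    (F : A → B) : Prop :=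
  Function.Injective F ∧ ∃ η : ℝ → ℝ, IsHomeoIci η ∧
    ∀ x y z : A, x ≠ y → x ≠ z → y ≠ z →
      dB (F x) (F y) / dB (F x) (F z) ≤ η (dA x y / dA x z)

end Boundary

/-- `X` (with basepoint `x`) is stably subsumed by `Y` (with basepoint `y`):
every stratum of `X` quasi-isometrically embeds in some stratum of `Y`. -/
def StablySubsumed (X Y : Type*) [MetricSpace X] [MetricSpace Y]
    (x : X) (y : Y) : Prop :=
  ∀ N : ℝ → ℝ → ℝ, IsMorseGauge N →
    ∃ N' : ℝ → ℝ → ℝ, IsMorseGauge N' ∧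
      ∃ K C : ℝ, 1 ≤ K ∧ 0 ≤ C ∧ ∃ f : X → Y,
        (∀ a ∈ morseStratum N x, f a ∈ morseStratum N' y) ∧
        ∀ a ∈ morseStratum N x, ∀ b ∈ morseStratum N x,
          dist a b / K - C ≤ dist (f a) (f b) ∧ dist (f a) (f b) ≤ K * dist a b + C

/-- Durham–Taylor stability of `f : Y → X`. -/
def DTStable {Y X : Type*} [MetricSpace Y] [MetricSpace X] (f : Y → X) : Prop :=
  ∀ K C : ℝ, 1 ≤ K → 0 ≤ C → ∃ R : ℝ, 0 ≤ R ∧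
    ∀ a₁ b₁ a₂ b₂ : ℝ, a₁ ≤ b₁ → a₂ ≤ b₂ → ∀ σ₁ σ₂ : ℝ → X,
      IsQuasiGeodesicOn K C (Icc a₁ b₁) σ₁ → IsQuasiGeodesicOn K C (Icc a₂ b₂) σ₂ →
      σ₁ a₁ = σ₂ a₂ → σ₁ b₁ = σ₂ b₂ →
      σ₁ a₁ ∈ Set.range f → σ₁ b₁ ∈ Set.range f →
      (∀ s ∈ Icc a₁ b₁, ∃ t ∈ Icc a₂ b₂, dist (σ₁ s) (σ₂ t) ≤ R) ∧
      (∀ t ∈ Icc a₂ b₂, ∃ s ∈ Icc a₁ b₁, dist (σ₁ s) (σ₂ t) ≤ R)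


section Proof0

variable {X : Type*} [MetricSpace X]

/-- Pure-real basepoint-change lemma. -/
theorem baseChangeAux {a b c p q r d : ℝ} (H1 : min b c - d ≤ a) (H4 : min p q - d ≤ a)
    (H9 : min b p - d ≤ r) (H12 : min c q - d ≤ r) :
    min (b + q) (c + p) - 2 * d ≤ a + r := by
  have hL := min_le_left (b + q) (c + p)
  have hR := min_le_right (b + q) (c + p)
  rcases le_total b c with h | h
  · rw [min_eq_left h] at H1
    rcases le_total q c with h2 | h2
    · rw [min_eq_right h2] at H12; linarith
    · rw [min_eq_left h2] at H12
      rcases le_total p q with h3 | h3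
      · rw [min_eq_left h3] at H4; linarith
      · rw [min_eq_right h3] at H4; linarith
  · rw [min_eq_right h] at H1
    rcases le_total p b with h2 | h2
    · rw [min_eq_right h2] at H9; linarith
    · rw [min_eq_left h2] at H9
      rcases le_total q p with h3 | h3
      · rw [min_eq_right h3] at H4; linarith
      · rw [min_eq_left h3] at H4; linarith

/-- Core lemma: if `g` is a geodesic segment from `p` to `x` on which `p` is a
point closest to `e`, and `γp` is a geodesic from `e` to `p`, then the
concatenation of `γp` and `g` is a `(3,0)`-quasi-geodesic from `e` to `x`;
hence, by the Morse property of an `N`-Morse geodesic `α` from `e` to `x`, the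
point `γp t` is `2 N 3 0`-close to `α t` for `t ≤ dist e p`. -/
theorem nearAux {N : ℝ → ℝ → ℝ} {e x : X} {α : ℝ → X}
    (hα : IsMorseGeodesicFromTo N α e x)
    {g : ℝ → X} {L : ℝ} (hL : 0 ≤ L)
    (hgiso : ∀ s ∈ Icc (0:ℝ) L, ∀ u ∈ Icc (0:ℝ) L, dist (g s) (g u) = |s - u|)
    (hgL : g L = x) {p : X} (hg0 : g 0 = p)
    {γp : ℝ → X} (hγp : IsGeodesicFromTo γp e p)
    (hmin : ∀ m ∈ Icc (0:ℝ) L, dist e p ≤ dist e (g m))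
    {t : ℝ} (ht0 : 0 ≤ t) (htρ : t ≤ dist e p) (htx : t ≤ dist e x) :
    dist (α t) (γp t) ≤ 2 * N 3 0 := by
  classical
  set ρ : ℝ := dist e p with hρdef
  have hρ0 : 0 ≤ ρ := dist_nonneg
  set σ : ℝ → X := fun s => if s ≤ ρ then γp s else g (s - ρ) with hσ
  have hγiso := hγp.1.2
  have hγ0 : γp 0 = e := hγp.2.1
  have hγρ : γp ρ = p := hγp.2.2
  have hde : ∀ s ∈ Icc (0:ℝ) ρ, dist e (γp s) = s := by
    intro s hs
    have h := hγiso 0 ⟨le_rfl, hρ0⟩ s hs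
    rw [hγ0] at h
    rw [h, abs_of_nonpos (by linarith [hs.1])]; ring
  have key : ∀ s ∈ Icc (0:ℝ) (ρ + L), ∀ u ∈ Icc (0:ℝ) (ρ + L), s ≤ u →
      u - s ≤ 3 * dist (σ s) (σ u) ∧ dist (σ s) (σ u) ≤ u - s := by
    intro s hs u hu hsu
    by_cases h1 : u ≤ ρ
    · have h2 : s ≤ ρ := le_trans hsu h1
      have hd : dist (σ s) (σ u) = u - s := by
        simp only [hσ, if_pos h1, if_pos h2]
        rw [hγiso s ⟨hs.1, h2⟩ u ⟨le_trans hs.1 hsu, h1⟩,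
          abs_of_nonpos (by linarith)]; ring
      constructor <;> rw [hd] <;> linarith
    · push_neg at h1
      by_cases h2 : s ≤ ρ
      · have hm : u - ρ ∈ Icc (0:ℝ) L := ⟨by linarith, by linarith [hu.2]⟩
        have hσs : σ s = γp s := by simp only [hσ, if_pos h2]
        have hσu : σ u = g (u - ρ) := by simp only [hσ, if_neg (not_le.mpr h1)]
        have e1 : dist (γp s) p = ρ - s := by
          rw [← hγρ, hγiso s ⟨hs.1, h2⟩ ρ ⟨hρ0, le_rfl⟩,
            abs_of_nonpos (by linarith)]; ring
        have e2 : dist p (g (u - ρ)) = u - ρ := by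
          rw [← hg0, hgiso 0 ⟨le_rfl, hL⟩ (u - ρ) hm,
            abs_of_nonpos (by linarith [hm.1])]; ring
        have hup : dist (σ s) (σ u) ≤ u - s := by
          rw [hσs, hσu]
          calc dist (γp s) (g (u - ρ)) ≤ dist (γp s) p + dist p (g (u - ρ)) :=
                dist_triangle _ _ _
            _ = u - s := by rw [e1, e2]; ring
        have hse : dist e (γp s) = s := hde s ⟨hs.1, h2⟩
        have l1 : ρ - s ≤ dist (σ s) (σ u) := by
          have t1 := dist_triangle e (γp s) (g (u - ρ))
          have t2 := hmin (u - ρ) hm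
          rw [hse] at t1
          rw [hσs, hσu]; linarith
        have l2 : (u - ρ) - (ρ - s) ≤ dist (σ s) (σ u) := by
          have t1 := dist_triangle p (γp s) (g (u - ρ))
          rw [dist_comm p (γp s), e1] at t1
          rw [hσs, hσu]; linarith
        constructor
        · rcases le_total (u - ρ) (2 * (ρ - s)) with h | h
          · linarith
          · linarith
        · exact hup
      · push_neg at h2
        have hmu : u - ρ ∈ Icc (0:ℝ) L := ⟨by linarith, by linarith [hu.2]⟩
        have hms : s - ρ ∈ Icc (0:ℝ) L := ⟨by linarith, by linarith [hs.2]⟩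
        have hd : dist (σ s) (σ u) = u - s := by
          simp only [hσ, if_neg (not_le.mpr h2), if_neg (not_le.mpr h1)]
          rw [hgiso (s - ρ) hms (u - ρ) hmu, abs_of_nonpos (by linarith)]; ring
        constructor <;> rw [hd] <;> linarith
  have hQG : IsQuasiGeodesicOn 3 0 (Icc 0 (ρ + L)) σ := by
    intro s hs u hu
    rcases le_total s u with h | h
    · obtain ⟨h1, h2⟩ := key s hs u hu h
      rw [abs_of_nonpos (by linarith)]
      constructor <;> linarith
    · obtain ⟨h1, h2⟩ := key u hu s hs h
      rw [dist_comm (σ s) (σ u)] at *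
      rw [abs_of_nonneg (by linarith)]
      constructor <;> linarith
  have hdx : 0 ≤ dist e x := dist_nonneg
  have hσ0 : σ 0 ∈ α '' Icc 0 (dist e x) := by
    have h : σ 0 = γp 0 := by simp only [hσ, if_pos hρ0]
    rw [h, hγ0]
    exact ⟨0, ⟨le_rfl, hdx⟩, hα.1.2.1⟩
  have hσE : σ (ρ + L) ∈ α '' Icc 0 (dist e x) := by
    have hx : x ∈ α '' Icc 0 (dist e x) := ⟨dist e x, ⟨hdx, le_rfl⟩, hα.1.2.2⟩
    by_cases hLρ : ρ + L ≤ ρ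
    · have hL0 : L = 0 := le_antisymm (by linarith) hL
      have h : σ (ρ + L) = γp ρ := by
        simp only [hσ, if_pos hLρ, hL0, add_zero]
        exact if_pos le_rfl
      have hpx : p = x := by rw [← hg0, show (0:ℝ) = L from hL0.symm, hgL]
      rw [h, hγρ, hpx]; exact hx
    · have h : σ (ρ + L) = g L := by
        simp only [hσ, if_neg hLρ, add_sub_cancel_left]
      rw [h, hgL]; exact hx
  obtain ⟨w, hw, hwd⟩ := hα.2 3 0 (by norm_num) le_rfl 0 (ρ + L) (by linarith) σ hQG
    hσ0 hσE t ⟨ht0, by linarith⟩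
  obtain ⟨s₁, hs₁, rfl⟩ := hw
  have hσt : σ t = γp t := by simp only [hσ, if_pos htρ]
  rw [hσt] at hwd
  have hds₁ : dist e (α s₁) = s₁ := by
    have h := hα.1.1.2 0 ⟨le_rfl, hdx⟩ s₁ hs₁
    rw [hα.1.2.1] at h
    rw [h, abs_of_nonpos (by linarith [hs₁.1])]; ring
  have hdt : dist e (γp t) = t := hde t ⟨ht0, htρ⟩
  have habs : |s₁ - t| ≤ N 3 0 := by
    have h := abs_dist_sub_le (α s₁) (γp t) e
    rw [dist_comm (α s₁) e, dist_comm (γp t) e, hds₁, hdt] at h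
    calc |s₁ - t| ≤ dist (α s₁) (γp t) := h
      _ ≤ N 3 0 := by rw [dist_comm] at hwd; exact hwd
  have hαt : dist (α t) (α s₁) = |t - s₁| :=
    hα.1.1.2 t ⟨ht0, htx⟩ s₁ hs₁
  calc dist (α t) (γp t) ≤ dist (α t) (α s₁) + dist (α s₁) (γp t) := dist_triangle _ _ _
    _ ≤ |t - s₁| + N 3 0 := by
        rw [hαt, dist_comm (α s₁) (γp t)]
        have := hwd
        linarith
    _ ≤ 2 * N 3 0 := by
        rw [abs_sub_comm]
        linarith [habs, abs_nonneg (s₁ - t)]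

/-- Thin triangle lemma: two `N`-Morse geodesics from `e` fellow-travel up to
the Gromov product of their endpoints. -/
theorem thinAux (hX : GeodesicSpace X) {N : ℝ → ℝ → ℝ} {e x z : X} {α ζ : ℝ → X}
    (hα : IsMorseGeodesicFromTo N α e x) (hζ : IsMorseGeodesicFromTo N ζ e z)
    {t : ℝ} (ht0 : 0 ≤ t) (ht : t ≤ gprod e x z) :
    dist (α t) (ζ t) ≤ 4 * N 3 0 := by
  obtain ⟨g, hg⟩ := hX x z
  set L : ℝ := dist x z with hLdef
  have hL0 : 0 ≤ L := dist_nonneg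
  have hgiso := hg.1.2
  have hg0 : g 0 = x := hg.2.1
  have hgLz : g L = z := hg.2.2
  -- minimizer of distance to e on g
  have hcont : ContinuousOn (fun m => dist e (g m)) (Icc 0 L) := by
    rw [Metric.continuousOn_iff]
    intro b hb ε hε
    refine ⟨ε, hε, fun a ha hab => ?_⟩
    have h1 : dist (dist e (g a)) (dist e (g b)) ≤ dist (g a) (g b) := by
      rw [Real.dist_eq]
      have h := abs_dist_sub_le (g a) (g b) e
      rw [dist_comm (g a) e, dist_comm (g b) e] at h
      exact h
    have h2 : dist (g a) (g b) = |a - b| := hgiso a ha b hb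
    rw [Real.dist_eq] at hab
    calc dist (dist e (g a)) (dist e (g b)) ≤ |a - b| := by rw [← h2]; exact h1
      _ < ε := hab
  obtain ⟨m₀, hm₀, hmin₀⟩ := isCompact_Icc.exists_isMinOn (α := ℝ)
    (nonempty_Icc.mpr hL0) hcont
  have hmin : ∀ m ∈ Icc (0:ℝ) L, dist e (g m₀) ≤ dist e (g m) := fun m hm => hmin₀ hm
  obtain ⟨γp, hγp⟩ := hX e (g m₀)
  -- basic distances
  have hdpx : dist (g m₀) x = m₀ := by
    rw [← hg0, hgiso m₀ hm₀ 0 ⟨le_rfl, hL0⟩, abs_of_nonneg (by linarith [hm₀.1])]; ring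
  have hdpz : dist (g m₀) z = L - m₀ := by
    rw [← hgLz, hgiso m₀ hm₀ L ⟨hL0, le_rfl⟩, abs_of_nonpos (by linarith [hm₀.2])]; ring
  have hρge : gprod e x z ≤ dist e (g m₀) := by
    have t1 := dist_triangle e (g m₀) x
    have t2 := dist_triangle e (g m₀) z
    rw [hdpx] at t1
    rw [hdpz] at t2
    simp only [gprod]
    rw [← hLdef]
    linarith
  have hgxz : gprod e x z ≤ dist e x := by
    have h := dist_triangle e x z
    simp only [gprod]; linarith
  have hgzx : gprod e x z ≤ dist e z := by
    have h := dist_triangle e z x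
    rw [dist_comm z x] at h
    simp only [gprod]; linarith
  -- first half: g₁ from p to x
  have h1 : dist (α t) (γp t) ≤ 2 * N 3 0 := by
    refine nearAux hα (g := fun m => g (m₀ - m)) (L := m₀) hm₀.1 ?_ ?_ ?_ hγp ?_
      ht0 (le_trans ht hρge) (le_trans ht hgxz)
    · intro s hs u hu
      have h := hgiso (m₀ - s) ⟨by linarith [hs.2], by linarith [hs.1, hm₀.2]⟩
        (m₀ - u) ⟨by linarith [hu.2], by linarith [hu.1, hm₀.2]⟩
      rw [h, abs_sub_comm]
      congr 1; ring
    · simp only [sub_self]; exact hg0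
    · simp only [sub_zero]
    · intro m hm
      exact hmin (m₀ - m) ⟨by linarith [hm.2], by linarith [hm.1, hm₀.2]⟩
  -- second half: g₂ from p to z
  have h2 : dist (ζ t) (γp t) ≤ 2 * N 3 0 := by
    refine nearAux hζ (g := fun m => g (m₀ + m)) (L := L - m₀) (by linarith [hm₀.2]) ?_ ?_ ?_ hγp ?_
      ht0 (le_trans ht hρge) (le_trans ht hgzx)
    · intro s hs u hu
      have h := hgiso (m₀ + s) ⟨by linarith [hs.1, hm₀.1], by linarith [hs.2]⟩
        (m₀ + u) ⟨by linarith [hu.1, hm₀.1], by linarith [hu.2]⟩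
      rw [h]
      congr 1; ring
    · show g (m₀ + (L - m₀)) = z
      rw [show m₀ + (L - m₀) = L by ring, hgLz]
    · simp only [add_zero]
    · intro m hm
      exact hmin (m₀ + m) ⟨by linarith [hm.1, hm₀.1], by linarith [hm.2]⟩
  calc dist (α t) (ζ t) ≤ dist (α t) (γp t) + dist (γp t) (ζ t) := dist_triangle _ _ _
    _ ≤ 2 * N 3 0 + 2 * N 3 0 := by
        rw [dist_comm (γp t) (ζ t)]; linarith
    _ = 4 * N 3 0 := by ring

theorem gprod_nonneg' (e x z : X) : 0 ≤ gprod e x z := by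
  have h := dist_triangle x e z
  simp only [gprod]
  rw [dist_comm x e] at h
  linarith

/-- The `e`-based four-point inequality with constant `4 N 3 0`. -/
theorem eVersion (hX : GeodesicSpace X) {e : X} {N : ℝ → ℝ → ℝ}
    {x y z : X} (hx : x ∈ morseStratum N e) (hy : y ∈ morseStratum N e)
    (hz : z ∈ morseStratum N e) :
    gprod e x y ≥ min (gprod e x z) (gprod e z y) - 4 * N 3 0 := by
  obtain ⟨α, hα⟩ := hx
  obtain ⟨β, hβ⟩ := hy
  obtain ⟨ζ, hζ⟩ := hz
  set m : ℝ := min (gprod e x z) (gprod e z y) with hm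
  have hm0 : 0 ≤ m := le_min (gprod_nonneg' e x z) (gprod_nonneg' e z y)
  have hm1 : m ≤ gprod e x z := min_le_left _ _
  have hm2 : m ≤ gprod e z y := min_le_right _ _
  have hgzy : gprod e z y = gprod e y z := by
    simp only [gprod, dist_comm z y]; ring
  have d1 : dist (α m) (ζ m) ≤ 4 * N 3 0 := thinAux hX hα hζ hm0 hm1
  have d2 : dist (β m) (ζ m) ≤ 4 * N 3 0 := by
    refine thinAux hX hβ hζ hm0 ?_
    rw [← hgzy]; exact hm2
  have hmx : m ≤ dist e x := by
    have h := dist_triangle e x z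
    have : gprod e x z ≤ dist e x := by simp only [gprod]; linarith
    linarith
  have hmy : m ≤ dist e y := by
    have h := dist_triangle e y z
    have : gprod e z y ≤ dist e y := by
      simp only [gprod]
      rw [dist_comm y z] at h
      linarith
    linarith
  have hdx0 : 0 ≤ dist e x := dist_nonneg
  have hdy0 : 0 ≤ dist e y := dist_nonneg
  have hxα : dist x (α m) = dist e x - m := by
    have h := hα.1.1.2 (dist e x) ⟨hdx0, le_rfl⟩ m ⟨hm0, hmx⟩
    rw [hα.1.2.2] at h
    rw [h, abs_of_nonneg (by linarith)]
  have hyβ : dist (β m) y = dist e y - m := by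
    have h := hβ.1.1.2 m ⟨hm0, hmy⟩ (dist e y) ⟨hdy0, le_rfl⟩
    rw [hβ.1.2.2] at h
    rw [h, abs_of_nonpos (by linarith)]; ring
  have hchain : dist x y ≤ (dist e x - m) + (4 * N 3 0 + 4 * N 3 0) + (dist e y - m) := by
    have t1 := dist_triangle x (α m) y
    have t2 := dist_triangle (α m) (β m) y
    have t3 := dist_triangle (α m) (ζ m) (β m)
    rw [dist_comm (ζ m) (β m)] at t3
    linarith
  simp only [gprod]
  linarith

end Proof0

/-- each stratum `X^(N)_e` is 8N(3,0)-hyperbolic in the four-point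
sense, and 4N(3,0)-hyperbolic when the base point of the products is `e`. -/
theorem statement0 {X : Type*} [MetricSpace X] (hX : GeodesicSpace X) (e : X)
    (N : ℝ → ℝ → ℝ) (hN : IsMorseGauge N) :
    (∀ w ∈ morseStratum N e, ∀ x ∈ morseStratum N e, ∀ y ∈ morseStratum N e,
        ∀ z ∈ morseStratum N e,
        gprod w x y ≥ min (gprod w x z) (gprod w z y) - 8 * N 3 0) ∧
    (∀ x ∈ morseStratum N e, ∀ y ∈ morseStratum N e, ∀ z ∈ morseStratum N e,
        gprod e x y ≥ min (gprod e x z) (gprod e z y) - 4 * N 3 0) := by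
  have eV : ∀ x ∈ morseStratum N e, ∀ y ∈ morseStratum N e, ∀ z ∈ morseStratum N e,
      gprod e x y ≥ min (gprod e x z) (gprod e z y) - 4 * N 3 0 :=
    fun x hx y hy z hz => eVersion hX hx hy hz
  refine ⟨?_, eV⟩
  intro w hw x hx y hy z hz
  have gcomm : ∀ a b c : X, gprod a b c = gprod a c b := by
    intro a b c; simp only [gprod, dist_comm b c]; ring
  have H1 := eV x hx y hy z hz
  have H4 := eV x hx y hy w hw
  have H9 := eV w hw z hz x hx
  have H12 := eV w hw z hz y hy
  rw [gcomm e w x, min_comm] at H9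
  rw [gcomm e y z, gcomm e w z, min_comm] at H12
  rw [gcomm e w z] at H9
  have key := baseChangeAux H1 H4 H9 H12
  have hc : ∀ u v : X, dist u v = dist v u := fun u v => dist_comm u v
  rcases le_total (gprod e x z + gprod e w y) (gprod e z y + gprod e x w) with hk | hk
  · rw [min_eq_left hk] at key
    have h2 : min (gprod w x z) (gprod w z y) ≤ gprod w x z := min_le_left _ _
    simp only [gprod] at key h2 ⊢
    linarith [hc w x, hc w y, hc w z, hc x y, hc x z, hc z y, hc e w, hc e x, hc e y, hc e z,
      hc x w, hc y z, hc w e]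
  · rw [min_eq_right hk] at key
    have h2 : min (gprod w x z) (gprod w z y) ≤ gprod w z y := min_le_right _ _
    simp only [gprod] at key h2 ⊢
    linarith [hc w x, hc w y, hc w z, hc x y, hc x z, hc z y, hc e w, hc e x, hc e y, hc e z,
      hc x w, hc y z, hc w e]
end

section
/- Let X and Y be geodesic metric spaces, let q : X → Y be a (K,C)-quasi-isometry, let e ∈ X, and let N be a Morse gauge. Then there exists a Morse gauge N', depending only on N, K and C, such that q(X^(N)_e) ⊆ Y^(N')_{q(e)}: for every x ∈ X^(N)_e there is an N'-Morse geodesic in Y from q(e) to q(x). -/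
open Set Filter

/-! ### Auxiliary lemmas for `statement2` -/

private lemma discrete_ivt' (v : ℕ → ℝ) (n : ℕ) (t Δ : ℝ) (h0 : v 0 ≤ t) (hn : t ≤ v n)
    (hstep : ∀ i, |v (i+1) - v i| ≤ Δ) : ∃ i, |v i - t| ≤ Δ := by
  by_contra h
  push_neg at h
  have hΔ : 0 ≤ Δ := le_trans (abs_nonneg _) (hstep 0)
  have key : ∀ i, v i < t := by
    intro i
    induction i with
    | zero =>
      have := h 0
      rcases abs_cases (v 0 - t) with ⟨he, _⟩ | ⟨he, _⟩ <;> linarith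
    | succ i ih =>
      have h1 := h i
      have h2 : |v i - t| = t - v i := by
        rw [abs_sub_comm]; exact abs_of_nonneg (by linarith)
      have h3 := hstep i
      rcases abs_cases (v (i+1) - v i) with ⟨he, _⟩ | ⟨he, _⟩ <;> linarith
  linarith [key n]

private lemma min_lip' (p q r : ℝ) : |min p r - min q r| ≤ |p - q| := by
  rcases le_total p r with h1 | h1 <;> rcases le_total q r with h2 | h2 <;>
    rcases abs_cases (p - q) with ⟨he, _⟩ | ⟨he, _⟩ <;>
    simp only [min_eq_left, min_eq_right, h1, h2] <;>
    rw [abs_le] <;> constructor <;> linarith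

private lemma pullback_qg {X Y : Type*} [MetricSpace X] [MetricSpace Y]
    (K C : ℝ) (hK : 1 ≤ K) (hC : 0 ≤ C)
    (q : X → Y) (hq : IsQIEmbedding K C q)
    (inv : Y → X) (hinv : ∀ y, dist y (q (inv y)) ≤ C)
    (K' C' : ℝ) (hK' : 1 ≤ K') (hC' : 0 ≤ C')
    (a b : ℝ) (hab : a < b) (σ : ℝ → Y)
    (hσ : IsQuasiGeodesicOn K' C' (Icc a b) σ)
    (xa xb : X) (hxa : q xa = σ a) (hxb : q xb = σ b) :
    ∃ τ : ℝ → X, τ a = xa ∧ τ b = xb ∧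
      (∀ s ∈ Icc a b, dist (σ s) (q (τ s)) ≤ C) ∧
      IsQuasiGeodesicOn (K*K') (K*(C'+3*C)) (Icc a b) τ := by
  classical
  set τ : ℝ → X := fun s => if s = b then xb else if s = a then xa else inv (σ s) with hτ
  have hτa : τ a = xa := by simp [hτ, hab.ne]
  have hτb : τ b = xb := by simp [hτ]
  have key : ∀ u ∈ Icc a b, dist (σ u) (q (τ u)) ≤ C := by
    intro u _
    by_cases h1 : u = b
    · subst h1; rw [hτb, hxb]; simpa using hC
    · by_cases h2 : u = a
      · subst h2; rw [hτa, hxa]; simpa using hC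
      · have hτu : τ u = inv (σ u) := by simp [hτ, h1, h2]
        rw [hτu]; exact hinv (σ u)
  refine ⟨τ, hτa, hτb, key, ?_⟩
  intro s hs t ht
  have hK0 : (0:ℝ) < K := lt_of_lt_of_le one_pos hK
  have hK'0 : (0:ℝ) < K' := lt_of_lt_of_le one_pos hK'
  have hks := key s hs
  have hkt := key t ht
  have hσst := hσ s hs t ht
  have hq1 := (hq (τ s) (τ t)).1
  have hq2 := (hq (τ s) (τ t)).2
  have htri1 : dist (q (τ s)) (q (τ t)) ≤ dist (σ s) (σ t) + 2*C := by
    have h4 := dist_triangle4 (q (τ s)) (σ s) (σ t) (q (τ t))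
    have hc1 : dist (q (τ s)) (σ s) = dist (σ s) (q (τ s)) := dist_comm _ _
    linarith
  have htri2 : dist (σ s) (σ t) - 2*C ≤ dist (q (τ s)) (q (τ t)) := by
    have h4 := dist_triangle4 (σ s) (q (τ s)) (q (τ t)) (σ t)
    have hc2 : dist (q (τ t)) (σ t) = dist (σ t) (q (τ t)) := dist_comm _ _
    linarith
  have habs : 0 ≤ |s - t| := abs_nonneg _
  constructor
  · have h1 : |s - t| / K' ≤ dist (σ s) (σ t) + C' := by linarith [hσst.1]
    have h2 : |s - t| ≤ K' * (dist (σ s) (σ t) + C') := by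
      rw [div_le_iff₀ hK'0] at h1; linarith [h1]
    have h3 : dist (σ s) (σ t) ≤ K * dist (τ s) (τ t) + 3*C := by linarith
    have h4 : |s - t| ≤ K' * (K * dist (τ s) (τ t) + 3*C + C') :=
      le_trans h2 (by nlinarith)
    rw [sub_le_iff_le_add, div_le_iff₀ (by positivity : (0:ℝ) < K*K')]
    have hd : 0 ≤ dist (τ s) (τ t) := dist_nonneg
    have hKK : 1 ≤ K*K := by nlinarith
    have hnn : (0:ℝ) ≤ K'*(C'+3*C) := mul_nonneg hK'0.le (by linarith)
    nlinarith [h4, le_mul_of_one_le_left hnn hKK]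
  · have h1 : dist (τ s) (τ t) / K ≤ dist (q (τ s)) (q (τ t)) + C := by linarith
    rw [div_le_iff₀ hK0] at h1
    have h2 : dist (q (τ s)) (q (τ t)) ≤ K' * |s - t| + C' + 2*C := by linarith [hσst.2]
    nlinarith [h1, h2]

private lemma lemA' {X Y : Type*} [MetricSpace X] [MetricSpace Y]
    (N : ℝ → ℝ → ℝ) (K C : ℝ) (hK : 1 ≤ K) (hC : 0 ≤ C)
    (q : X → Y) (hq : IsQIEmbedding K C q)
    (inv : Y → X) (hinv : ∀ y, dist y (q (inv y)) ≤ C)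
    (γ : ℝ → X) (L : ℝ)
    (hΓ : IsMorseSet N (γ '' Icc 0 L))
    (K' C' : ℝ) (hK' : 1 ≤ K') (hC' : 0 ≤ C')
    (hNval : 0 ≤ N (K*K') (K*(C'+3*C)))
    (a b : ℝ) (hab : a ≤ b) (σ : ℝ → Y)
    (hσ : IsQuasiGeodesicOn K' C' (Icc a b) σ)
    (ha : σ a ∈ q '' (γ '' Icc 0 L)) (hb : σ b ∈ q '' (γ '' Icc 0 L)) :
    ∀ s ∈ Icc a b, ∃ g ∈ q '' (γ '' Icc 0 L),
      dist (σ s) g ≤ K * N (K*K') (K*(C'+3*C)) + 2*C := by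
  have hK0 : (0:ℝ) < K := lt_of_lt_of_le one_pos hK
  rcases hab.eq_or_lt with heq | hlt
  · subst heq
    intro s hs
    have hsa : s = a := le_antisymm hs.2 hs.1
    subst hsa
    exact ⟨σ s, ha, by simp; positivity⟩
  · obtain ⟨xa, hxaΓ, hqxa⟩ := ha
    obtain ⟨xb, hxbΓ, hqxb⟩ := hb
    obtain ⟨τ, hτa, hτb, key, hτqg⟩ :=
      pullback_qg K C hK hC q hq inv hinv K' C' hK' hC' a b hlt σ hσ xa xb hqxa hqxb
    have hKK' : (1:ℝ) ≤ K*K' := by nlinarith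
    have hCC' : (0:ℝ) ≤ K*(C'+3*C) := mul_nonneg hK0.le (by linarith)
    have hmorse := hΓ (K*K') (K*(C'+3*C)) hKK' hCC' a b hab τ hτqg
      (by rw [hτa]; exact hxaΓ) (by rw [hτb]; exact hxbΓ)
    intro s hs
    obtain ⟨g, hgΓ, hgd⟩ := hmorse s hs
    refine ⟨q g, ⟨g, hgΓ, rfl⟩, ?_⟩
    have h1 := dist_triangle (σ s) (q (τ s)) (q g)
    have h2 := (hq (τ s) g).2
    have h3 : K * dist (τ s) g ≤ K * N (K*K') (K*(C'+3*C)) :=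
      mul_le_mul_of_nonneg_left hgd hK0.le
    linarith [key s hs]

private lemma lemC' {X Y : Type*} [MetricSpace X] [MetricSpace Y]
    (N : ℝ → ℝ → ℝ) (K C : ℝ) (hK : 1 ≤ K) (hC : 0 ≤ C)
    (q : X → Y) (hq : IsQIEmbedding K C q)
    (inv : Y → X) (hinv : ∀ y, dist y (q (inv y)) ≤ C)
    (e x : X) (γ : ℝ → X) (hγ : IsGeodesicFromTo γ e x)
    (hΓ : IsMorseSet N (γ '' Icc 0 (dist e x)))
    (hNval : 0 ≤ N K (3*(K*C)))
    (γ' : ℝ → Y) (hγ' : IsGeodesicFromTo γ' (q e) (q x)) :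
    ∀ t ∈ Icc 0 (dist e x), ∃ p ∈ γ' '' Icc 0 (dist (q e) (q x)),
      dist (q (γ t)) p ≤ K*(K + 3*(K*C) + 2 * N K (3*(K*C))) + 2*C := by
  have hK0 : (0:ℝ) < K := lt_of_lt_of_le one_pos hK
  obtain ⟨⟨hL, hgeo⟩, hγ0, hγL⟩ := hγ
  obtain ⟨⟨hL', hgeo'⟩, hγ'0, hγ'L⟩ := hγ'
  set L := dist e x with hLdef
  set L' := dist (q e) (q x) with hL'def
  intro t ht
  rcases eq_or_lt_of_le hL' with h0 | h0
  · refine ⟨γ' 0, ⟨0, ⟨le_refl 0, hL'⟩, rfl⟩, ?_⟩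
    rw [hγ'0]
    have h1 : dist (q (γ t)) (q e) ≤ K * dist (γ t) e + C := (hq (γ t) e).2
    have h2 : dist (γ t) e = t := by
      rw [← hγ0, hgeo t ht 0 ⟨le_refl 0, hL⟩, sub_zero, abs_of_nonneg ht.1]
    have h3 : L / K - C ≤ L' := (hq e x).1
    have h4 : L ≤ K * C := by
      have h3' : L / K - C ≤ 0 := by rw [← h0] at h3; exact h3
      have : L / K ≤ C := by linarith
      rw [div_le_iff₀ hK0] at this; linarith
    nlinarith [ht.2, mul_nonneg hK0.le hNval, mul_nonneg (mul_nonneg hK0.le hK0.le) hC, sq_nonneg K]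
  · have hγ'qg : IsQuasiGeodesicOn 1 0 (Icc 0 L') γ' := by
      intro s hs u hu
      rw [hgeo' s hs u hu]
      constructor <;> simp
    obtain ⟨τ, hτ0, hτL, key, hτqg⟩ :=
      pullback_qg K C hK hC q hq inv hinv 1 0 le_rfl le_rfl 0 L' h0 γ' hγ'qg
        e x hγ'0.symm hγ'L.symm
    rw [mul_one, show K*(0+3*C) = 3*(K*C) from by ring] at hτqg
    have hmorse := hΓ K (3*(K*C)) hK (by positivity) 0 L' hL' τ hτqg
      (by rw [hτ0]; exact ⟨0, ⟨le_refl 0, hL⟩, hγ0⟩)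
      (by rw [hτL]; exact ⟨L, ⟨hL, le_refl L⟩, hγL⟩)
    set R := N K (3*(K*C)) with hRdef
    set Δ := K + 3*(K*C) with hΔdef
    set n := ⌈L'⌉₊ with hndef
    set v : ℕ → ℝ := fun i => dist e (τ (min (i:ℝ) L')) with hvdef
    have hmem : ∀ i : ℕ, min (i:ℝ) L' ∈ Icc (0:ℝ) L' := fun i =>
      ⟨le_min (Nat.cast_nonneg i) hL', min_le_right _ _⟩
    have hv0 : v 0 = 0 := by
      simp only [hvdef, Nat.cast_zero, min_eq_left hL', hτ0, dist_self]
    have hvn : v n = L := by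
      simp only [hvdef, hndef, min_eq_right (Nat.le_ceil L'), hτL, hLdef]
    have hstep : ∀ i : ℕ, |v (i+1) - v i| ≤ Δ := by
      intro i
      have h1 : |v (i+1) - v i| ≤ dist (τ (min ((i:ℝ)+1) L')) (τ (min (i:ℝ) L')) := by
        have := abs_dist_sub_le (τ (min ((i:ℝ)+1) L')) (τ (min (i:ℝ) L')) e
        simp only [hvdef, Nat.cast_add, Nat.cast_one]
        rw [dist_comm (τ _) e, dist_comm (τ _) e] at this
        exact this
      have h2 := (hτqg _ (hmem (i+1)) _ (hmem i)).2
      push_cast at h2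
      have h3 : |min ((i:ℝ)+1) L' - min (i:ℝ) L'| ≤ 1 := by
        have := min_lip' ((i:ℝ)+1) (i:ℝ) L'
        simpa using this
      have h4 : K * |min ((i:ℝ)+1) L' - min (i:ℝ) L'| ≤ K * 1 :=
        mul_le_mul_of_nonneg_left h3 hK0.le
      calc |v (i+1) - v i| ≤ _ := h1
        _ ≤ _ := h2
        _ ≤ K * 1 + 3*(K*C) := by linarith
        _ = Δ := by rw [hΔdef]; ring
    obtain ⟨i, hi⟩ := discrete_ivt' v n t Δ (by rw [hv0]; exact ht.1) (by rw [hvn]; exact ht.2) hstep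
    set s := min (i:ℝ) L' with hsdef
    obtain ⟨g, ⟨w, hw, hgw⟩, hgd⟩ := hmorse s (hmem i)
    have hew : dist e g = w := by
      rw [← hgw, ← hγ0, hgeo 0 ⟨le_refl 0, hL⟩ w hw, abs_of_nonpos (by linarith [hw.1]), neg_sub, sub_zero]
    have h1 : |v i - w| ≤ R := by
      have := abs_dist_sub_le (τ s) g e
      rw [dist_comm (τ s) e, dist_comm g e, hew] at this
      exact le_trans this hgd
    have h2 : |t - w| ≤ Δ + R := by
      have := abs_sub_le t (v i) w
      rw [abs_sub_comm t (v i)] at this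
      linarith
    have h3 : dist (γ t) (τ s) ≤ Δ + 2*R := by
      have htri := dist_triangle (γ t) g (τ s)
      have heqw : dist (γ t) g = |t - w| := by rw [← hgw]; exact hgeo t ht w hw
      have hcomm : dist g (τ s) = dist (τ s) g := dist_comm _ _
      linarith
    have h4 : dist (q (γ t)) (q (τ s)) ≤ K*(Δ + 2*R) + C := by
      have := (hq (γ t) (τ s)).2
      nlinarith [this, mul_le_mul_of_nonneg_left h3 hK0.le]
    have h5 : dist (q (τ s)) (γ' s) ≤ C := by
      rw [dist_comm]; exact key s (hmem i)
    refine ⟨γ' s, ⟨s, hmem i, rfl⟩, ?_⟩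
    have htri := dist_triangle (q (γ t)) (q (τ s)) (γ' s)
    have : K*(Δ + 2*R) = K*(K + 3*(K*C) + 2*R) := by rw [hΔdef]
    linarith

private lemma perturb' {Y : Type*} [MetricSpace Y] (K' C' D : ℝ) (hD : 0 ≤ D)
    (a b : ℝ) (σ : ℝ → Y) (hσ : IsQuasiGeodesicOn K' C' (Icc a b) σ)
    (pa pb : Y) (hpa : dist (σ a) pa ≤ D) (hpb : dist (σ b) pb ≤ D) :
    ∃ σ' : ℝ → Y, (σ' a = pa ∨ σ' a = pb) ∧ σ' b = pb ∧
      (∀ s ∈ Icc a b, dist (σ s) (σ' s) ≤ D) ∧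
      IsQuasiGeodesicOn K' (C' + 2*D) (Icc a b) σ' := by
  classical
  set σ' : ℝ → Y := fun s => if s = b then pb else if s = a then pa else σ s with hσ'
  have hb' : σ' b = pb := by simp [hσ']
  have ha' : σ' a = pa ∨ σ' a = pb := by
    by_cases h : a = b
    · right; rw [h, hb']
    · left; simp [hσ', h]
  have hclose : ∀ s ∈ Icc a b, dist (σ s) (σ' s) ≤ D := by
    intro s _
    by_cases h1 : s = b
    · subst h1; rw [hb']; exact hpb
    · by_cases h2 : s = a
      · subst h2
        have : σ' s = pa := by simp [hσ', h1]
        rw [this]; exact hpa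
      · have : σ' s = σ s := by simp [hσ', h1, h2]
        rw [this]; simpa using hD
  refine ⟨σ', ha', hb', hclose, ?_⟩
  intro s hs t ht
  have h1 := hclose s hs
  have h2 := hclose t ht
  have hσst := hσ s hs t ht
  have htri1 := dist_triangle4 (σ' s) (σ s) (σ t) (σ' t)
  have htri2 := dist_triangle4 (σ s) (σ' s) (σ' t) (σ t)
  have hc1 : dist (σ' s) (σ s) = dist (σ s) (σ' s) := dist_comm _ _
  have hc2 : dist (σ' t) (σ t) = dist (σ t) (σ' t) := dist_comm _ _
  constructor <;> [linarith [hσst.1]; linarith [hσst.2]]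

/-- a `(K,C)`-quasi-isometry maps `X^(N)_e` into `Y^(N')_{q e}`,
where `N'` depends only on `N`, `K` and `C`. -/
theorem statement2 (N : ℝ → ℝ → ℝ) (hN : IsMorseGauge N)
    (K C : ℝ) (hK : 1 ≤ K) (hC : 0 ≤ C) :
    ∃ N' : ℝ → ℝ → ℝ, IsMorseGauge N' ∧
      ∀ (X Y : Type*) [MetricSpace X] [MetricSpace Y],
        GeodesicSpace X → GeodesicSpace Y →
        ∀ q : X → Y, IsQuasiIsometry K C q → ∀ e : X,
          ∀ x ∈ morseStratum N e,
            ∃ γ : ℝ → Y, IsMorseGeodesicFromTo N' γ (q e) (q x) := by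
  have hK0 : (0:ℝ) < K := lt_of_lt_of_le one_pos hK
  have hR : 0 ≤ N K (3*(K*C)) := hN K _ hK (by positivity)
  refine ⟨fun K' C' =>
      (K * N K (3*(K*C)) + 2*C)
      + (K * N (K*K') (K*(C' + 2*(K * N K (3*(K*C)) + 2*C) + 3*C)) + 2*C)
      + (K*(K + 3*(K*C) + 2 * N K (3*(K*C))) + 2*C), ?_, ?_⟩
  · -- the new gauge is a Morse gauge
    intro K' C' hK' hC'
    have h1 : (0:ℝ) ≤ K * N K (3*(K*C)) := mul_nonneg hK0.le hR
    have hKK' : (1:ℝ) ≤ K*K' := by nlinarith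
    have harg : (0:ℝ) ≤ K*(C' + 2*(K * N K (3*(K*C)) + 2*C) + 3*C) :=
      mul_nonneg hK0.le (by linarith)
    have h2 : (0:ℝ) ≤ N (K*K') (K*(C' + 2*(K * N K (3*(K*C)) + 2*C) + 3*C)) :=
      hN _ _ hKK' harg
    have h3 : (0:ℝ) ≤ K * N (K*K') (K*(C' + 2*(K * N K (3*(K*C)) + 2*C) + 3*C)) :=
      mul_nonneg hK0.le h2
    have h4 : (0:ℝ) ≤ K*(K + 3*(K*C) + 2 * N K (3*(K*C))) :=
      mul_nonneg hK0.le (by nlinarith)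
    beta_reduce
    linarith
  · intro X Y _ _ hGX hGY q hq e x hx
    obtain ⟨hqemb, hqsurj⟩ := hq
    choose inv hinv using hqsurj
    obtain ⟨γ, hγgeo, hΓ⟩ := hx
    obtain ⟨γ', hγ'geo⟩ := hGY (q e) (q x)
    refine ⟨γ', hγ'geo, ?_⟩
    set L := dist e x with hLdef
    set L' := dist (q e) (q x) with hL'def
    set D₀ := K * N K (3*(K*C)) + 2*C with hD₀def
    have hL : (0:ℝ) ≤ L := dist_nonneg
    have hL' : (0:ℝ) ≤ L' := dist_nonneg
    have hD₀ : (0:ℝ) ≤ D₀ := by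
      have : (0:ℝ) ≤ K * N K (3*(K*C)) := mul_nonneg hK0.le hR
      rw [hD₀def]; linarith
    -- Lemma B: points of γ' lie D₀-close to q(Γ)
    have hγ'qg : IsQuasiGeodesicOn 1 0 (Icc 0 L') γ' := by
      intro s hs u hu
      rw [hγ'geo.1.2 s hs u hu]
      constructor <;> simp
    have hend0 : γ' 0 ∈ q '' (γ '' Icc 0 L) :=
      ⟨γ 0, ⟨0, ⟨le_refl 0, hL⟩, rfl⟩, by rw [hγgeo.2.1, ← hγ'geo.2.1]⟩
    have hendL : γ' L' ∈ q '' (γ '' Icc 0 L) :=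
      ⟨γ L, ⟨L, ⟨hL, le_refl L⟩, rfl⟩, by rw [hγgeo.2.2, ← hγ'geo.2.2]⟩
    have hNval10 : 0 ≤ N (K*1) (K*(0+3*C)) := by
      rw [mul_one, show K*(0+3*C) = 3*(K*C) from by ring]; exact hR
    have haveB := lemA' N K C hK hC q hqemb inv hinv γ L hΓ 1 0 le_rfl le_rfl
      hNval10 0 L' hL' γ' hγ'qg hend0 hendL
    rw [mul_one, show K*(0+3*C) = 3*(K*C) from by ring] at haveB
    -- main Morse-set goal
    intro K' C' hK' hC' a b hab σ hσ hσa hσb s hs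
    obtain ⟨ua, hua, huaeq⟩ := hσa
    obtain ⟨ub, hub, hubeq⟩ := hσb
    obtain ⟨pa, hpaΓ, hpad⟩ := haveB ua hua
    obtain ⟨pb, hpbΓ, hpbd⟩ := haveB ub hub
    rw [huaeq] at hpad
    rw [hubeq] at hpbd
    obtain ⟨σ', hσ'a, hσ'b, hclose, hσ'qg⟩ := perturb' K' C' D₀ hD₀ a b σ hσ pa pb hpad hpbd
    have hKK' : (1:ℝ) ≤ K*K' := by nlinarith
    have hNvalM : 0 ≤ N (K*K') (K*(C' + 2*D₀ + 3*C)) :=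
      hN _ _ hKK' (mul_nonneg hK0.le (by linarith))
    have hmain := lemA' N K C hK hC q hqemb inv hinv γ L hΓ K' (C' + 2*D₀) hK'
      (by linarith) hNvalM a b hab σ' hσ'qg
      (by rcases hσ'a with h | h <;> rw [h] <;> [exact hpaΓ; exact hpbΓ])
      (by rw [hσ'b]; exact hpbΓ)
    obtain ⟨g, hgΓq, hgd⟩ := hmain s hs
    obtain ⟨z, ⟨w, hw, hzw⟩, hqz⟩ := hgΓq
    obtain ⟨p, hpΓ', hpd⟩ := lemC' N K C hK hC q hqemb inv hinv e x γ hγgeo hΓ hR γ' hγ'geo w hw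
    rw [hzw, hqz] at hpd
    refine ⟨p, hpΓ', ?_⟩
    have htri := dist_triangle4 (σ s) (σ' s) g p
    have hcl := hclose s hs
    have hc1 : dist (σ s) (σ' s) = dist (σ s) (σ' s) := rfl
    show dist (σ s) p ≤
      D₀ + (K * N (K*K') (K*(C' + 2*D₀ + 3*C)) + 2*C)
        + (K*(K + 3*(K*C) + 2 * N K (3*(K*C))) + 2*C)
    linarith
end

section
/- Let X and Y be geodesic metric spaces, let q : X → Y be a (K,C)-quasi-isometry, and let e ∈ X. Then for every Morse gauge N there is a Morse gauge N', depending only on N, K and C, such that the restriction of q to X^(N)_e is a (K,C)-quasi-isometric embedding of X^(N)_e into Y^(N')_{q(e)}. In particular, quasi-isometric geodesic metric spaces stably subsume each other, i.e. they are stably equivalent. -/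
open Set Filter

section Aux
open Set

private lemma discreteIVT (s : ℕ → ℝ) (u step : ℝ) (hstep : 0 ≤ step) :
    ∀ n : ℕ, s 0 ≤ u → u ≤ s n → (∀ i < n, |s (i+1) - s i| ≤ step) →
    ∃ i ≤ n, |s i - u| ≤ step := by
  intro n
  induction n with
  | zero =>
    intro h1 h2 _
    exact ⟨0, le_refl _, by rw [abs_sub_le_iff]; constructor <;> linarith⟩
  | succ n ih =>
    intro h1 h2 hs
    by_cases hu : u ≤ s n
    · obtain ⟨i, hi, h⟩ := ih h1 hu (fun i hi => hs i (by omega))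
      exact ⟨i, by omega, h⟩
    · push_neg at hu
      refine ⟨n+1, le_refl _, ?_⟩
      have hstepn : s (n+1) - s n ≤ step :=
        (le_abs_self _).trans (hs n (Nat.lt_succ_self n))
      rw [abs_sub_le_iff]
      constructor <;> linarith

/-- Endpoint adjustment: a quasi-geodesic whose endpoints are within `D` of a
Morse set `G` stays near `G`, with worsened constant. -/
private lemma lemE {X : Type*} [MetricSpace X] {N : ℝ → ℝ → ℝ} {G : Set X}
    (hG : IsMorseSet N G) {K C D : ℝ} (hK : 1 ≤ K) (hC : 0 ≤ C) (hD : 0 ≤ D)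
    {a b : ℝ} (hab : a ≤ b) {σ : ℝ → X} (hσ : IsQuasiGeodesicOn K C (Icc a b) σ)
    {ga gb : X} (hga : ga ∈ G) (hgb : gb ∈ G)
    (hda : dist (σ a) ga ≤ D) (hdb : dist (σ b) gb ≤ D) :
    ∀ s ∈ Icc a b, ∃ g ∈ G, dist (σ s) g ≤ N K (C + 2*D + 2) := by
  classical
  have hK0 : (0:ℝ) < K := lt_of_lt_of_le zero_lt_one hK
  set c : ℝ → ℝ := fun t => max a (min b t) with hc_def
  set σ' : ℝ → X := fun t => if t < a then ga else if b < t then gb else σ t with hσ'_def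
  have hcmem : ∀ t : ℝ, c t ∈ Icc a b := fun t =>
    ⟨le_max_left _ _, max_le hab (min_le_left _ _)⟩
  have hclip : ∀ x y : ℝ, |c x - c y| ≤ |x - y| := by
    intro x y
    have h1 : |c x - c y| ≤ |min b x - min b y| := by
      simp only [hc_def, max_comm a]
      exact abs_max_sub_max_le_abs _ _ _
    have h2 : |min b x - min b y| ≤ max |b - b| |x - y| := abs_min_sub_min_le_max _ _ _ _
    rw [sub_self, abs_zero] at h2
    exact h1.trans (h2.trans (max_le (abs_nonneg _) le_rfl))
  have hnear : ∀ x ∈ Icc (a-1) (b+1), dist (σ' x) (σ (c x)) ≤ D ∧ |x - c x| ≤ 1 := by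
    intro x hx
    by_cases h1 : x < a
    · have hxb : x ≤ b := le_of_lt (lt_of_lt_of_le h1 hab)
      have hcx : c x = a := by
        simp only [hc_def]; rw [min_eq_right hxb, max_eq_left (le_of_lt h1)]
      constructor
      · simp only [hσ'_def, if_pos h1, hcx]
        rw [dist_comm]; exact hda
      · rw [hcx, abs_sub_comm, abs_of_nonneg (by linarith)]
        linarith [hx.1]
    · push_neg at h1
      by_cases h2 : b < x
      · have hcx : c x = b := by
          simp only [hc_def]; rw [min_eq_left (le_of_lt h2), max_eq_right hab]
        constructor
        · simp only [hσ'_def, if_neg (not_lt.mpr h1), if_pos h2, hcx]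
          rw [dist_comm]; exact hdb
        · rw [hcx, abs_of_nonneg (by linarith)]
          linarith [hx.2]
      · push_neg at h2
        have hcx : c x = x := by
          simp only [hc_def]; rw [min_eq_right h2, max_eq_right h1]
        constructor
        · simp only [hσ'_def, if_neg (not_lt.mpr h1), if_neg (not_lt.mpr h2), hcx]
          simpa using hD
        · rw [hcx, sub_self, abs_zero]; norm_num
  have hqg' : IsQuasiGeodesicOn K (C + 2*D + 2) (Icc (a-1) (b+1)) σ' := by
    intro s hs t ht
    obtain ⟨hns, hgs⟩ := hnear s hs
    obtain ⟨hnt, hgt⟩ := hnear t ht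
    have hqg := hσ (c s) (hcmem s) (c t) (hcmem t)
    have htri1 : dist (σ' s) (σ' t) ≤ dist (σ (c s)) (σ (c t)) + 2*D := by
      have := dist_triangle4 (σ' s) (σ (c s)) (σ (c t)) (σ' t)
      have h3 : dist (σ (c t)) (σ' t) ≤ D := by rw [dist_comm]; exact hnt
      linarith
    have htri2 : dist (σ (c s)) (σ (c t)) ≤ dist (σ' s) (σ' t) + 2*D := by
      have := dist_triangle4 (σ (c s)) (σ' s) (σ' t) (σ (c t))
      have h3 : dist (σ (c s)) (σ' s) ≤ D := by rw [dist_comm]; exact hns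
      linarith
    have hst1 : |c s - c t| ≤ |s - t| := hclip s t
    have hst2 : |s - t| ≤ |c s - c t| + 2 := by
      have := abs_sub_le s (c s) t
      have := abs_sub_le (c s) (c t) t
      have h4 : |c t - t| ≤ 1 := by rw [abs_sub_comm]; exact hgt
      linarith
    constructor
    · have hdiv1 : |s - t| / K ≤ (|c s - c t| + 2) / K := by gcongr
      have hdiv2 : (|c s - c t| + 2) / K = |c s - c t| / K + 2 / K := add_div _ _ _
      have hdiv3 : 2 / K ≤ 2 := div_le_self (by norm_num) hK
      linarith [hqg.1]
    · have hmul : K * |c s - c t| ≤ K * |s - t| := by gcongr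
      linarith [hqg.2]
  intro s hs
  have key := hG K (C + 2*D + 2) hK (by linarith) (a-1) (b+1) (by linarith) σ' hqg'
    (by simp only [hσ'_def, if_pos (by linarith : a - 1 < a)]; exact hga)
    (by simp only [hσ'_def, if_neg (not_lt.mpr (by linarith : a ≤ b + 1)),
          if_pos (by linarith : b < b + 1)]; exact hgb)
    s ⟨by linarith [hs.1], by linarith [hs.2]⟩
  obtain ⟨g, hg, hdg⟩ := key
  refine ⟨g, hg, ?_⟩
  have hσ's : σ' s = σ s := by
    simp only [hσ'_def, if_neg (not_lt.mpr hs.1), if_neg (not_lt.mpr hs.2)]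
  rwa [hσ's] at hdg

end Aux
section Aux2
open Set

/-- Morse-ness transfers across Hausdorff closeness. -/
private lemma lemB {X : Type*} [MetricSpace X] {N : ℝ → ℝ → ℝ} {G H : Set X}
    (hG : IsMorseSet N G) {D : ℝ} (hD : 0 ≤ D)
    (hHG : ∀ h ∈ H, ∃ g ∈ G, dist h g ≤ D)
    (hGH : ∀ g ∈ G, ∃ h ∈ H, dist g h ≤ D) :
    IsMorseSet (fun K C => N K (C + 2*D + 2) + D) H := by
  intro K C hK hC a b hab σ hσ ha hb s hs
  obtain ⟨ga, hga, hda⟩ := hHG _ ha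
  obtain ⟨gb, hgb, hdb⟩ := hHG _ hb
  obtain ⟨g, hg, hdg⟩ := lemE hG hK hC hD hab hσ hga hgb hda hdb s hs
  obtain ⟨h, hh, hdh⟩ := hGH g hg
  refine ⟨h, hh, ?_⟩
  show dist (σ s) h ≤ N K (C + 2*D + 2) + D
  linarith [dist_triangle (σ s) g h]

/-- The image of a Morse set under a quasi-isometry is Morse. -/
private lemma lemImage {X Y : Type*} [MetricSpace X] [MetricSpace Y]
    {N : ℝ → ℝ → ℝ} {K C : ℝ}
    (hK : 1 ≤ K) (hC : 0 ≤ C) {q : X → Y} (hq : IsQuasiIsometry K C q)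
    {G : Set X} (hG : IsMorseSet N G) :
    IsMorseSet (fun K₂ C₂ => K * N (K*K₂) (K*C₂ + 7*K*C + 2) + 2*C) (q '' G) := by
  classical
  have hK0 : (0:ℝ) < K := lt_of_lt_of_le zero_lt_one hK
  intro K₂ C₂ hK₂ hC₂ a b hab σ hσ ha hb
  -- coarse inverse along σ
  set τ : ℝ → X := fun t => (hq.2 (σ t)).choose with hτ_def
  have hτC : ∀ t, dist (σ t) (q (τ t)) ≤ C := fun t => (hq.2 (σ t)).choose_spec
  -- pull-back distance comparison
  have hup : ∀ x y : X, dist x y ≤ K * dist (q x) (q y) + K * C := by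
    intro x y
    have h1 := (hq.1 x y).1
    have h2 : dist x y / K ≤ dist (q x) (q y) + C := by linarith
    rw [div_le_iff₀ hK0] at h2
    nlinarith
  -- τ is a quasi-geodesic
  have hτqg : IsQuasiGeodesicOn (K*K₂) (K*C₂ + 3*K*C) (Icc a b) τ := by
    intro s hs t ht
    have hσq := hσ s hs t ht
    have hemb := hq.1 (τ s) (τ t)
    have hc1 : dist (q (τ s)) (q (τ t)) ≤ dist (σ s) (σ t) + 2*C := by
      have := dist_triangle4 (q (τ s)) (σ s) (σ t) (q (τ t))
      have h1 : dist (q (τ s)) (σ s) = dist (σ s) (q (τ s)) := dist_comm _ _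
      linarith [hτC s, hτC t]
    have hc2 : dist (σ s) (σ t) ≤ dist (q (τ s)) (q (τ t)) + 2*C := by
      have := dist_triangle4 (σ s) (q (τ s)) (q (τ t)) (σ t)
      have h1 : dist (q (τ t)) (σ t) = dist (σ t) (q (τ t)) := dist_comm _ _
      linarith [hτC s, hτC t]
    constructor
    · -- lower bound
      have h1 : |s - t| / K₂ - C₂ - 3*C ≤ K * dist (τ s) (τ t) := by
        have := hemb.2
        linarith [hσq.1]
      have h2 : (|s - t| / K₂ - (C₂ + 3*C)) / K ≤ dist (τ s) (τ t) := by
        rw [div_le_iff₀ hK0]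
        nlinarith [h1, mul_comm K (dist (τ s) (τ t))]
      rw [sub_div] at h2
      have h3 : |s - t| / (K * K₂) = |s - t| / K₂ / K := by
        rw [div_div, mul_comm]
      have h4 : (C₂ + 3*C) / K ≤ C₂ + 3*C := div_le_self (by linarith) hK
      have h5 : C₂ + 3*C ≤ K*C₂ + 3*K*C := by nlinarith
      linarith
    · -- upper bound
      have h1 : dist (τ s) (τ t) ≤ K * dist (q (τ s)) (q (τ t)) + K * C := hup _ _
      have h2 : K * dist (q (τ s)) (q (τ t)) ≤ K * (dist (σ s) (σ t) + 2*C) := by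
        gcongr
      have h3 : K * (dist (σ s) (σ t) + 2*C) ≤ K * (K₂ * |s - t| + C₂ + 2*C) := by
        gcongr; linarith [hσq.2]
      have h4 : K * (K₂ * |s - t| + C₂ + 2*C) = K * K₂ * |s - t| + K * C₂ + 2*K*C := by ring
      linarith
  -- endpoints near G
  obtain ⟨ga, hga, hqa⟩ := ha
  obtain ⟨gb, hgb, hqb⟩ := hb
  have hend : ∀ (t : ℝ) (g : X), q g = σ t → dist (τ t) g ≤ 2*K*C := by
    intro t g hg
    have h1 : dist (q (τ t)) (q g) ≤ C := by
      rw [hg, dist_comm]; exact hτC t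
    have := hup (τ t) g
    nlinarith
  have hKK₂ : (1:ℝ) ≤ K * K₂ := by nlinarith
  have hC₃ : (0:ℝ) ≤ K*C₂ + 3*K*C := by nlinarith
  have hD₀ : (0:ℝ) ≤ 2*K*C := by nlinarith
  have key := lemE hG hKK₂ hC₃ hD₀ hab hτqg hga hgb (hend a ga hqa) (hend b gb hqb)
  intro s hs
  obtain ⟨g, hg, hdg⟩ := key s hs
  refine ⟨q g, mem_image_of_mem q hg, ?_⟩
  have h1 : dist (q (τ s)) (q g) ≤ K * dist (τ s) g + C := (hq.1 (τ s) g).2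
  have h2 : dist (σ s) (q g) ≤ dist (σ s) (q (τ s)) + dist (q (τ s)) (q g) :=
    dist_triangle _ _ _
  have h3 : K * dist (τ s) g ≤ K * N (K*K₂) (K*C₂ + 3*K*C + 2*(2*K*C) + 2) := by
    gcongr
  have h4 : K*C₂ + 3*K*C + 2*(2*K*C) + 2 = K*C₂ + 7*K*C + 2 := by ring
  rw [h4] at h3
  show dist (σ s) (q g) ≤ K * N (K*K₂) (K*C₂ + 7*K*C + 2) + 2*C
  linarith [hτC s]

end Aux2
section Aux3
open Set

/-- A quasi-geodesic whose image is Morse fellow-travels any quasi-geodesic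
with the same endpoints. -/
private lemma lemC {X : Type*} [MetricSpace X] {N : ℝ → ℝ → ℝ} {K₁ C₁ K₂ C₂ : ℝ}
    (hK₁ : 1 ≤ K₁) (hC₁ : 0 ≤ C₁) (hK₂ : 1 ≤ K₂) (hC₂ : 0 ≤ C₂)
    {L M : ℝ} (hL : 0 ≤ L) (hM : 0 ≤ M) {σ τ : ℝ → X}
    (hσ : IsQuasiGeodesicOn K₁ C₁ (Icc 0 L) σ)
    (hτ : IsQuasiGeodesicOn K₂ C₂ (Icc 0 M) τ)
    (hmorse : IsMorseSet N (σ '' Icc 0 L))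
    (h0 : τ 0 = σ 0) (h1 : τ M = σ L) :
    (∀ t ∈ Icc (0:ℝ) M, ∃ s ∈ Icc (0:ℝ) L, dist (τ t) (σ s) ≤ N K₂ C₂) ∧
    (∀ u ∈ Icc (0:ℝ) L, ∃ t ∈ Icc (0:ℝ) M, dist (σ u) (τ t) ≤
      K₁*(K₁*(2*(N K₂ C₂) + K₂ + C₂ + C₁)) + C₁ + N K₂ C₂) := by
  classical
  have hK₁0 : (0:ℝ) < K₁ := lt_of_lt_of_le zero_lt_one hK₁
  have h0M : (0:ℝ) ∈ Icc (0:ℝ) M := ⟨le_rfl, hM⟩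
  have h0L : (0:ℝ) ∈ Icc (0:ℝ) L := ⟨le_rfl, hL⟩
  have hLL : L ∈ Icc (0:ℝ) L := ⟨hL, le_rfl⟩
  have part1 : ∀ t ∈ Icc (0:ℝ) M, ∃ s ∈ Icc (0:ℝ) L, dist (τ t) (σ s) ≤ N K₂ C₂ := by
    intro t ht
    have key := hmorse K₂ C₂ hK₂ hC₂ 0 M hM τ hτ
      (by rw [h0]; exact mem_image_of_mem σ h0L)
      (by rw [h1]; exact mem_image_of_mem σ hLL) t ht
    obtain ⟨g, ⟨s, hsmem, rfl⟩, hd⟩ := key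
    exact ⟨s, hsmem, hd⟩
  refine ⟨part1, ?_⟩
  set R₀ := N K₂ C₂ with hR₀def
  have hR₀ : 0 ≤ R₀ := by
    obtain ⟨s, hsmem, hd⟩ := part1 0 h0M
    exact le_trans dist_nonneg hd
  set n : ℕ := ⌈M⌉₊ + 1 with hn_def
  have hn0 : 0 < n := Nat.succ_pos _
  have hnR : (0:ℝ) < n := by exact_mod_cast hn0
  set t : ℕ → ℝ := fun i => (i : ℝ) * M / n with ht_def
  have htmem : ∀ i ≤ n, t i ∈ Icc (0:ℝ) M := by
    intro i hi
    have hin : (i:ℝ) ≤ n := by exact_mod_cast hi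
    constructor
    · simp only [ht_def]; positivity
    · simp only [ht_def]; rw [div_le_iff₀ hnR]; nlinarith
  have hMn : M / n ≤ 1 := by
    rw [div_le_one hnR]
    calc M ≤ (⌈M⌉₊ : ℝ) := Nat.le_ceil M
      _ ≤ n := by exact_mod_cast Nat.le_succ _
  have htgap : ∀ i : ℕ, t (i+1) - t i = M / n := by
    intro i
    simp only [ht_def]
    push_cast
    ring
  have ht0 : t 0 = 0 := by simp [ht_def]
  have htn : t n = M := by
    simp only [ht_def]
    exact mul_div_cancel_left₀ M (ne_of_gt hnR)
  set P : ℕ → Prop := fun i => ∃ s ∈ Icc (0:ℝ) L, dist (τ (t i)) (σ s) ≤ R₀ with hP_def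
  set sf : ℕ → ℝ := fun i => if i = 0 then 0 else if n ≤ i then L else
      if h : P i then h.choose else 0 with hsf_def
  have hs0 : sf 0 = 0 := by simp [hsf_def]
  have hsn : sf n = L := by
    simp only [hsf_def, if_neg (Nat.pos_iff_ne_zero.mp hn0), if_pos le_rfl]
  have hsf : ∀ i ≤ n, sf i ∈ Icc (0:ℝ) L ∧ dist (τ (t i)) (σ (sf i)) ≤ R₀ := by
    intro i hi
    rcases Nat.eq_zero_or_pos i with h0i | h0i
    · subst h0i
      rw [hs0, ht0, h0]
      exact ⟨h0L, by simpa using hR₀⟩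
    · by_cases hni : n ≤ i
      · have hieq : i = n := le_antisymm hi hni
        subst hieq
        rw [hsn, htn, h1]
        exact ⟨hLL, by simpa using hR₀⟩
      · have hPi : P i := part1 (t i) (htmem i hi)
        have hsfi : sf i = hPi.choose := by
          simp only [hsf_def, if_neg (Nat.pos_iff_ne_zero.mp h0i), if_neg hni, dif_pos hPi]
        rw [hsfi]
        exact ⟨hPi.choose_spec.1, hPi.choose_spec.2⟩
  set step := K₁ * (2*R₀ + K₂ + C₂ + C₁) with hstep_def
  have hstep0 : 0 ≤ step := by
    have : (0:ℝ) ≤ 2*R₀ + K₂ + C₂ + C₁ := by linarith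
    positivity
  have hdiff : ∀ i < n, |sf (i+1) - sf i| ≤ step := by
    intro i hi
    have hi1 : i + 1 ≤ n := hi
    have hii : i ≤ n := le_of_lt hi
    obtain ⟨hm1, hd1⟩ := hsf i hii
    obtain ⟨hm2, hd2⟩ := hsf (i+1) hi1
    have hττ : dist (τ (t i)) (τ (t (i+1))) ≤ K₂ * (M/n) + C₂ := by
      have hb := (hτ (t i) (htmem i hii) (t (i+1)) (htmem (i+1) hi1)).2
      have habs : |t i - t (i+1)| = M / n := by
        rw [abs_sub_comm, htgap i]
        exact abs_of_nonneg (by positivity)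
      rwa [habs] at hb
    have hσσ : dist (σ (sf i)) (σ (sf (i+1))) ≤ 2*R₀ + K₂ + C₂ := by
      have htri := dist_triangle4 (σ (sf i)) (τ (t i)) (τ (t (i+1))) (σ (sf (i+1)))
      have hMn' : K₂ * (M/n) ≤ K₂ := by nlinarith [hMn]
      have h' : dist (σ (sf i)) (τ (t i)) = dist (τ (t i)) (σ (sf i)) := dist_comm _ _
      linarith
    have hlow := (hσ (sf i) hm1 (sf (i+1)) hm2).1
    have hq : |sf i - sf (i+1)| / K₁ ≤ 2*R₀ + K₂ + C₂ + C₁ := by linarith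
    rw [div_le_iff₀ hK₁0] at hq
    rw [abs_sub_comm]
    calc |sf i - sf (i+1)| ≤ (2*R₀ + K₂ + C₂ + C₁) * K₁ := hq
      _ = step := by rw [hstep_def]; ring
  intro u hu
  obtain ⟨i, hin, hiu⟩ := discreteIVT sf u step hstep0 n
    (by rw [hs0]; exact hu.1) (by rw [hsn]; exact hu.2) hdiff
  obtain ⟨hmi, hdi⟩ := hsf i hin
  refine ⟨t i, htmem i hin, ?_⟩
  have hσb := (hσ u hu (sf i) hmi).2
  have h2 : dist (σ u) (τ (t i)) ≤ dist (σ u) (σ (sf i)) + dist (σ (sf i)) (τ (t i)) :=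
    dist_triangle _ _ _
  have h3 : |u - sf i| ≤ step := by rw [abs_sub_comm]; exact hiu
  have h4 : K₁ * |u - sf i| ≤ K₁ * step := by gcongr
  have h5 : dist (σ (sf i)) (τ (t i)) = dist (τ (t i)) (σ (sf i)) := dist_comm _ _
  linarith

end Aux3
section Aux4
open Set

/-- Main lemma: a `(K,C)`-quasi-isometry maps the `N`-stratum into an
`N'`-stratum, with `N'` depending only on `N, K, C`. -/
private lemma lemMain (N : ℝ → ℝ → ℝ) (hN : IsMorseGauge N) (K C : ℝ)
    (hK : 1 ≤ K) (hC : 0 ≤ C) :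
    ∃ N' : ℝ → ℝ → ℝ, IsMorseGauge N' ∧
      ∀ (X Y : Type*) [MetricSpace X] [MetricSpace Y], GeodesicSpace Y →
        ∀ q : X → Y, IsQuasiIsometry K C q → ∀ e a : X,
          a ∈ morseStratum N e → q a ∈ morseStratum N' (q e) := by
  have hK0 : (0:ℝ) < K := lt_of_lt_of_le zero_lt_one hK
  set N₁ : ℝ → ℝ → ℝ := fun K₂ C₂ => K * N (K*K₂) (K*C₂ + 7*K*C + 2) + 2*C with hN₁def
  have hN₁ : IsMorseGauge N₁ := by
    intro K₂ C₂ hK₂ hC₂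
    have h1 : (1:ℝ) ≤ K * K₂ := by nlinarith
    have h2 : (0:ℝ) ≤ K*C₂ + 7*K*C + 2 := by nlinarith
    have := hN (K*K₂) (K*C₂ + 7*K*C + 2) h1 h2
    simp only [hN₁def]
    nlinarith
  have hR₀ : 0 ≤ N₁ 1 0 := hN₁ 1 0 le_rfl le_rfl
  set D₁ : ℝ := K*(K*(2*(N₁ 1 0) + 1 + 0 + C)) + C + N₁ 1 0 with hD₁def
  have hD₁0 : 0 ≤ D₁ := by
    have : (0:ℝ) ≤ K*(K*(2*(N₁ 1 0) + 1 + 0 + C)) := by positivity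
    simp only [hD₁def]; linarith
  have hR₀D : N₁ 1 0 ≤ D₁ := by
    have : (0:ℝ) ≤ K*(K*(2*(N₁ 1 0) + 1 + 0 + C)) := by positivity
    simp only [hD₁def]; linarith
  refine ⟨fun K₂ C₂ => N₁ K₂ (C₂ + 2*D₁ + 2) + D₁, ?_, ?_⟩
  · intro K₂ C₂ hK₂ hC₂
    have := hN₁ K₂ (C₂ + 2*D₁ + 2) hK₂ (by linarith)
    show 0 ≤ N₁ K₂ (C₂ + 2*D₁ + 2) + D₁
    linarith
  · intro X Y _ _ hYgeo q hq e a ha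
    obtain ⟨γ, ⟨⟨hL0, hgeo⟩, hγ0, hγL⟩, hGmorse⟩ := ha
    set L := dist e a with hLdef
    -- the pushed-forward quasi-geodesic
    set σ₀ : ℝ → Y := fun s => q (γ s) with hσ₀def
    have hσ₀ : IsQuasiGeodesicOn K C (Icc 0 L) σ₀ := by
      intro s hs u hu
      have := hq.1 (γ s) (γ u)
      rwa [hgeo s hs u hu] at this
    have hHmorse : IsMorseSet (fun K₂ C₂ => K * N (K*K₂) (K*C₂ + 7*K*C + 2) + 2*C)
        (σ₀ '' Icc 0 L) := by
      have h2 := lemImage hK hC hq hGmorse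
      rw [Set.image_image] at h2
      exact h2
    -- a geodesic in Y from q e to q a
    obtain ⟨γ', ⟨⟨hL'0, hgeo'⟩, h0', h1'⟩⟩ := hYgeo (q e) (q a)
    set L' := dist (q e) (q a) with hL'def
    have hτ : IsQuasiGeodesicOn 1 0 (Icc 0 L') γ' := by
      intro s hs u hu
      rw [hgeo' s hs u hu]
      constructor
      · simp
      · simp
    have he0 : γ' 0 = σ₀ 0 := by rw [h0', hσ₀def]; simp [hγ0]
    have he1 : γ' L' = σ₀ L := by rw [h1', hσ₀def]; simp [hγL]
    obtain ⟨hdir1, hdir2⟩ := lemC hK hC le_rfl le_rfl hL0 dist_nonneg hσ₀ hτ hHmorse he0 he1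
    -- Hausdorff closeness within D₁
    have hHG : ∀ h ∈ γ' '' Icc 0 L', ∃ g ∈ σ₀ '' Icc 0 L, dist h g ≤ D₁ := by
      rintro h ⟨u, hu, rfl⟩
      obtain ⟨s, hsmem, hd⟩ := hdir1 u hu
      exact ⟨σ₀ s, mem_image_of_mem σ₀ hsmem, le_trans hd hR₀D⟩
    have hGH : ∀ g ∈ σ₀ '' Icc 0 L, ∃ h ∈ γ' '' Icc 0 L', dist g h ≤ D₁ := by
      rintro g ⟨s, hsmem, rfl⟩
      obtain ⟨u, humem, hd⟩ := hdir2 s hsmem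
      refine ⟨γ' u, mem_image_of_mem γ' humem, le_of_le_of_eq hd ?_⟩
      simp only [hD₁def, hN₁def]
    have hfinal := lemB hHmorse hD₁0 hHG hGH
    exact ⟨γ', ⟨⟨⟨hL'0, hgeo'⟩, h0', h1'⟩, hfinal⟩⟩

end Aux4
/-- a `(K,C)`-quasi-isometry restricts to a `(K,C)`-quasi-isometric
embedding `X^(N)_e → Y^(N')_{q e}` with `N'` depending only on `N, K, C`; in
particular quasi-isometric geodesic spaces stably subsume each other. -/
theorem statement3 (N : ℝ → ℝ → ℝ) (hN : IsMorseGauge N)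
    (K C : ℝ) (hK : 1 ≤ K) (hC : 0 ≤ C) :
    ∃ N' : ℝ → ℝ → ℝ, IsMorseGauge N' ∧
      ∀ (X Y : Type*) [MetricSpace X] [MetricSpace Y],
        GeodesicSpace X → GeodesicSpace Y →
        ∀ q : X → Y, IsQuasiIsometry K C q → ∀ e : X,
          (∀ a ∈ morseStratum N e, q a ∈ morseStratum N' (q e)) ∧
          (∀ a ∈ morseStratum N e, ∀ b ∈ morseStratum N e,
            dist a b / K - C ≤ dist (q a) (q b) ∧
              dist (q a) (q b) ≤ K * dist a b + C) ∧
          StablySubsumed X Y e (q e) ∧ StablySubsumed Y X (q e) e := by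
  classical
  have hK0 : (0:ℝ) < K := lt_of_lt_of_le zero_lt_one hK
  obtain ⟨N', hN', hmain⟩ := lemMain N hN K C hK hC
  refine ⟨N', hN', ?_⟩
  intro X Y _ _ hXgeo hYgeo q hq e
  refine ⟨fun a ha => hmain X Y hYgeo q hq e a ha, fun a _ b _ => hq.1 a b, ?_, ?_⟩
  · -- StablySubsumed X Y e (q e)
    intro M hM
    obtain ⟨M', hM', h⟩ := lemMain M hM K C hK hC
    exact ⟨M', hM', K, C, hK, hC, q, fun a ha => h X Y hYgeo q hq e a ha,
      fun a _ b _ => hq.1 a b⟩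
  · -- StablySubsumed Y X (q e) e : build an adjusted coarse inverse
    set q' : Y → X := fun y => (hq.2 y).choose with hq'_def
    have hq'C : ∀ y, dist y (q (q' y)) ≤ C := fun y => (hq.2 y).choose_spec
    have hup : ∀ x y : X, dist x y ≤ K * dist (q x) (q y) + K * C := by
      intro x y
      have h1 := (hq.1 x y).1
      have h2 : dist x y / K ≤ dist (q x) (q y) + C := by linarith
      rw [div_le_iff₀ hK0] at h2
      nlinarith
    set f : Y → X := fun y => if y = q e then e else q' y with hf_def
    have hfe : f (q e) = e := by simp [hf_def]
    have hfnear : ∀ y, dist (f y) (q' y) ≤ 2*K*C := by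
      intro y
      by_cases hy : y = q e
      · subst hy
        rw [hfe]
        have h1 : dist (q e) (q (q' (q e))) ≤ C := hq'C (q e)
        have := hup e (q' (q e))
        nlinarith
      · simp only [hf_def, if_neg hy]
        simp
        positivity
    have hqq' : ∀ y y' : Y, dist (q (q' y)) (q (q' y')) ≤ dist y y' + 2*C := by
      intro y y'
      have := dist_triangle4 (q (q' y)) y y' (q (q' y'))
      have h1 : dist (q (q' y)) y = dist y (q (q' y)) := dist_comm _ _
      linarith [hq'C y, hq'C y']
    have hqq'2 : ∀ y y' : Y, dist y y' ≤ dist (q (q' y)) (q (q' y')) + 2*C := by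
      intro y y'
      have := dist_triangle4 y (q (q' y)) (q (q' y')) y'
      have h1 : dist (q (q' y')) y' = dist y' (q (q' y')) := dist_comm _ _
      linarith [hq'C y, hq'C y']
    have hfQI : IsQuasiIsometry K (7*K*C) f := by
      refine ⟨?_, ?_⟩
      · intro y y'
        have hn1 := hfnear y
        have hn2 := hfnear y'
        have htri1 : dist (f y) (f y') ≤ dist (q' y) (q' y') + 4*K*C := by
          have := dist_triangle4 (f y) (q' y) (q' y') (f y')
          have h1 : dist (q' y') (f y') = dist (f y') (q' y') := dist_comm _ _
          linarith
        have htri2 : dist (q' y) (q' y') ≤ dist (f y) (f y') + 4*K*C := by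
          have := dist_triangle4 (q' y) (f y) (f y') (q' y')
          have h1 : dist (q' y) (f y) = dist (f y) (q' y) := dist_comm _ _
          linarith
        constructor
        · -- lower bound
          have h1 : dist (q (q' y)) (q (q' y')) ≤ K * dist (q' y) (q' y') + C :=
            (hq.1 (q' y) (q' y')).2
          have h2 : dist y y' ≤ K * (dist (f y) (f y') + 4*K*C) + 3*C := by
            have := hqq'2 y y'
            nlinarith
          rw [sub_le_iff_le_add, div_le_iff₀ hK0]
          nlinarith
        · -- upper bound
          have h1 : dist (q' y) (q' y') ≤ K * dist (q (q' y)) (q (q' y')) + K*C :=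
            hup _ _
          have h2 : dist (q' y) (q' y') ≤ K * dist y y' + 3*K*C := by
            have := hqq' y y'
            nlinarith
          nlinarith
      · -- coarse surjectivity
        intro x
        refine ⟨q x, ?_⟩
        by_cases hx : q x = q e
        · have h1 : dist x e ≤ K * dist (q x) (q e) + K*C := hup x e
          rw [hx] at h1
          simp only [dist_self, mul_zero, zero_add] at h1
          have hfx : f (q x) = e := by rw [hx, hfe]
          rw [hfx]
          nlinarith
        · simp only [hf_def, if_neg hx]
          have h1 : dist x (q' (q x)) ≤ K * dist (q x) (q (q' (q x))) + K*C := hup _ _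
          nlinarith [hq'C (q x)]
    intro M hM
    have h7 : (0:ℝ) ≤ 7*K*C := by positivity
    obtain ⟨M', hM', h⟩ := lemMain M hM K (7*K*C) hK h7
    refine ⟨M', hM', K, 7*K*C, hK, h7, f, ?_, fun a _ b _ => hfQI.1 a b⟩
    intro a ha
    have := h Y X hXgeo f hfQI (q e) a ha
    rwa [hfe] at this
end

section
/- Let X be a geodesic metric space, e ∈ X, and let N ≤ N' be Morse gauges (pointwise order). Let ι : ∂X^(N)_e → ∂X^(N')_e be the map induced by the inclusion X^(N)_e ⊆ X^(N')_e. Then for all x, y ∈ ∂X^(N)_e one has (x·y)^N_e ≤ (ι(x)·ι(y))^{N'}_e ≤ (x·y)^N_e + 32N'(3,0). -/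
open Set Filter

section Statement6Aux

open Filter Set

variable {X : Type*} [MetricSpace X]

namespace S6

lemma gprod_nonneg (w x y : X) : 0 ≤ gprod w x y := by
  have h := dist_triangle x w y
  rw [dist_comm x w] at h
  unfold gprod; linarith

lemma gprod_comm (w x y : X) : gprod w x y = gprod w y x := by
  unfold gprod; rw [dist_comm x y]; ring

lemma gprod_le_left (w x y : X) : gprod w x y ≤ dist w x := by
  have h := dist_triangle w x y
  unfold gprod; linarith

lemma dist_from_start {γ : ℝ → X} {L : ℝ} (h : IsGeodesicSeg γ L) {s : ℝ}
    (hs : s ∈ Icc (0:ℝ) L) : dist (γ 0) (γ s) = s := by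
  rw [h.2 0 ⟨le_rfl, h.1⟩ s hs, zero_sub, abs_neg, abs_of_nonneg hs.1]

lemma dist_to_end {γ : ℝ → X} {L : ℝ} (h : IsGeodesicSeg γ L) {s : ℝ}
    (hs : s ∈ Icc (0:ℝ) L) : dist (γ s) (γ L) = L - s := by
  rw [h.2 s hs L ⟨h.1, le_rfl⟩, abs_of_nonpos (by linarith [hs.2])]
  ring

lemma IsGeodesicSeg.reverse {γ : ℝ → X} {L : ℝ} (h : IsGeodesicSeg γ L) :
    IsGeodesicSeg (fun s => γ (L - s)) L := by
  refine ⟨h.1, fun s hs t ht => ?_⟩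
  rw [h.2 (L - s) ⟨by linarith [hs.2], by linarith [hs.1]⟩
      (L - t) ⟨by linarith [ht.2], by linarith [ht.1]⟩]
  rw [show L - s - (L - t) = -(s - t) by ring, abs_neg]

lemma third_le_max {c₁ c₂ : ℝ} (h1 : 0 ≤ c₁) : (c₁ + c₂) / 3 ≤ max c₁ (c₂ - c₁) := by
  rcases le_total c₂ (2 * c₁) with h | h
  · exact le_trans (by linarith) (le_max_left _ _)
  · exact le_trans (by linarith) (le_max_right _ _)

/-- Concatenation of a geodesic from `J 0` to a closest point `τ μ` of the
segment `τ`, followed by `τ` onward, is a `(3,0)`-quasi-geodesic. -/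
lemma concat_qg {J τ : ℝ → X} {lJ μ D : ℝ}
    (hJ : IsGeodesicSeg J lJ) (hτ : IsGeodesicSeg τ D) (hμ : μ ∈ Icc (0:ℝ) D)
    (hJτ : J lJ = τ μ)
    (hmin : ∀ m ∈ Icc (0:ℝ) D, lJ ≤ dist (J 0) (τ m)) :
    IsQuasiGeodesicOn 3 0 (Icc 0 (lJ + (D - μ)))
      (fun s => if s ≤ lJ then J s else τ (μ + (s - lJ))) := by
  have hlJ : 0 ≤ lJ := hJ.1
  set Φ : ℝ → X := fun s => if s ≤ lJ then J s else τ (μ + (s - lJ)) with hΦ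
  have core : ∀ s ∈ Icc (0:ℝ) (lJ + (D - μ)), ∀ t ∈ Icc (0:ℝ) (lJ + (D - μ)),
      s ≤ t → (t - s) / 3 ≤ dist (Φ s) (Φ t) ∧ dist (Φ s) (Φ t) ≤ t - s := by
    intro s hs t ht hst
    by_cases h1 : t ≤ lJ
    · have h2 : s ≤ lJ := le_trans hst h1
      have : dist (Φ s) (Φ t) = t - s := by
        simp only [hΦ, if_pos h1, if_pos h2]
        rw [hJ.2 s ⟨hs.1, h2⟩ t ⟨ht.1, h1⟩, abs_of_nonpos (by linarith)]
        ring
      constructor <;> [skip; skip] <;> rw [this] <;> linarith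
    · push_neg at h1
      by_cases h2 : s ≤ lJ
      · -- s on J-leg, t on τ-leg
        set m : ℝ := μ + (t - lJ) with hm
        have hmI : m ∈ Icc (0:ℝ) D := ⟨by linarith [hμ.1], by linarith [ht.2]⟩
        have hΦs : Φ s = J s := if_pos h2
        have hΦt : Φ t = τ m := if_neg (not_le.mpr h1)
        have d1 : dist (J s) (J lJ) = lJ - s := dist_to_end hJ ⟨hs.1, h2⟩
        have d0 : dist (J 0) (J s) = s := dist_from_start hJ ⟨hs.1, h2⟩
        have d2 : dist (τ μ) (τ m) = m - μ := by
          rw [hτ.2 μ hμ m hmI, abs_of_nonpos (by linarith)]; ring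
        have low1 : lJ - s ≤ dist (J s) (τ m) := by
          have := hmin m hmI
          have htri := dist_triangle (J 0) (J s) (τ m)
          linarith
        have low2 : (m - μ) - (lJ - s) ≤ dist (J s) (τ m) := by
          have htri := dist_triangle (τ μ) (J s) (τ m)
          have : dist (τ μ) (J s) = lJ - s := by rw [← hJτ, dist_comm]; exact d1
          linarith
        have up : dist (J s) (τ m) ≤ (lJ - s) + (m - μ) := by
          have htri := dist_triangle (J s) (J lJ) (τ m)
          rw [d1, hJτ, d2] at htri
          exact htri
        have hts : t - s = (lJ - s) + (m - μ) := by rw [hm]; ring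
        rw [hΦs, hΦt]
        refine ⟨?_, by linarith⟩
        have hmax := third_le_max (c₂ := m - μ) (by linarith : (0:ℝ) ≤ lJ - s)
        rw [← hts] at hmax
        rcases max_cases (lJ - s) ((m - μ) - (lJ - s)) with ⟨heq, _⟩ | ⟨heq, _⟩ <;>
          rw [heq] at hmax <;> linarith
      · -- both on τ-leg
        push_neg at h2
        have hΦs : Φ s = τ (μ + (s - lJ)) := if_neg (not_le.mpr h2)
        have hΦt : Φ t = τ (μ + (t - lJ)) := if_neg (not_le.mpr h1)
        have hsI : μ + (s - lJ) ∈ Icc (0:ℝ) D := ⟨by linarith [hμ.1], by linarith [hs.2]⟩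
        have htI : μ + (t - lJ) ∈ Icc (0:ℝ) D := ⟨by linarith [hμ.1], by linarith [ht.2]⟩
        have : dist (Φ s) (Φ t) = t - s := by
          rw [hΦs, hΦt, hτ.2 _ hsI _ htI, show μ + (s - lJ) - (μ + (t - lJ)) = -(t - s) by ring,
            abs_neg, abs_of_nonneg (by linarith)]
        constructor <;> rw [this] <;> linarith
  intro s hs t ht
  rcases le_total s t with h | h
  · have := core s hs t ht h
    rw [abs_of_nonpos (by linarith : s - t ≤ 0)]
    constructor <;> [linarith [this.1]; linarith [this.2]]
  · have := core t ht s hs h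
    rw [abs_of_nonneg (by linarith : 0 ≤ s - t), dist_comm]
    constructor <;> [linarith [this.1]; linarith [this.2]]

/-- KEY GEOMETRIC LEMMA: two `N'`-Morse geodesics from `e` fellow-travel (with
constant `4·N'(3,0)`) up to (almost) the Gromov product of their endpoints. -/
lemma key_main (hX : GeodesicSpace X) {N' : ℝ → ℝ → ℝ} (hN' : IsMorseGauge N')
    {e a b : X} {α β : ℝ → X}
    (hα : IsMorseGeodesicFromTo N' α e a) (hβ : IsMorseGeodesicFromTo N' β e b)
    {t : ℝ} (ht0 : 0 ≤ t) (ht : t + 2 * N' 3 0 ≤ gprod e a b) :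
    dist (α t) (β t) ≤ 4 * N' 3 0 := by
  set n₀ : ℝ := N' 3 0 with hn₀def
  have hn₀ : 0 ≤ n₀ := hN' 3 0 (by norm_num) le_rfl
  obtain ⟨τ, hτg, hτ0, hτD⟩ := hX a b
  set D : ℝ := dist a b with hD
  have hD0 : 0 ≤ D := dist_nonneg
  set A : ℝ := dist e a with hA
  set B : ℝ := dist e b with hB
  have hA0 : 0 ≤ A := dist_nonneg
  have hB0 : 0 ≤ B := dist_nonneg
  -- closest point of τ to e
  have hcont : ContinuousOn (fun m => dist e (τ m)) (Icc (0:ℝ) D) := by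
    refine (LipschitzOnWith.of_dist_le_mul (K := 1) ?_).continuousOn
    intro x hx y hy
    rw [NNReal.coe_one, one_mul, Real.dist_eq]
    calc |dist e (τ x) - dist e (τ y)| ≤ dist (τ x) (τ y) := by
          rw [dist_comm e (τ x), dist_comm e (τ y)]; exact abs_dist_sub_le _ _ _
      _ = |x - y| := hτg.2 x hx y hy
      _ = dist x y := (Real.dist_eq x y).symm
  obtain ⟨μ, hμI, hμmin⟩ := isCompact_Icc.exists_isMinOn ⟨0, le_rfl, hD0⟩ hcont
  have hmin : ∀ m ∈ Icc (0:ℝ) D, dist e (τ μ) ≤ dist e (τ m) := fun m hm => hμmin hm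
  set z : X := τ μ with hz
  obtain ⟨J, hJg, hJ0, hJl⟩ := hX e z
  set lam : ℝ := dist e z with hlam
  have hlam0 : 0 ≤ lam := dist_nonneg
  have hlamA : lam ≤ A := by
    have := hmin 0 ⟨le_rfl, hD0⟩
    rwa [hτ0] at this
  have hlamB : lam ≤ B := by
    have := hmin D ⟨hD0, le_rfl⟩
    rwa [hτD] at this
  -- the forward quasi-geodesic from e to b through z
  set Φ : ℝ → X := fun s => if s ≤ lam then J s else τ (μ + (s - lam)) with hΦ
  have hqgΦ : IsQuasiGeodesicOn 3 0 (Icc 0 (lam + (D - μ))) Φ := by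
    refine S6.concat_qg hJg hτg hμI hJl ?_
    intro m hm; rw [hJ0]; exact hmin m hm
  have hΦ0 : Φ 0 = e := by
    simp only [hΦ, if_pos hlam0]; exact hJ0
  have hΦend : Φ (lam + (D - μ)) = b := by
    by_cases hc : lam + (D - μ) ≤ lam
    · have hμD : μ = D := le_antisymm hμI.2 (by linarith)
      simp only [hΦ, if_pos hc]
      have : J (lam + (D - μ)) = J lam := by rw [hμD]; ring_nf
      rw [this, hJl, hz, hμD, hτD]
    · simp only [hΦ, if_neg hc]
      rw [show μ + (lam + (D - μ) - lam) = D by ring, hτD]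
  -- the backward quasi-geodesic from e to a through z
  set τ' : ℝ → X := fun s => τ (D - s) with hτ'
  have hτ'g : IsGeodesicSeg τ' D := S6.IsGeodesicSeg.reverse hτg
  set μ' : ℝ := D - μ with hμ'
  have hμ'I : μ' ∈ Icc (0:ℝ) D := ⟨by linarith [hμI.2], by linarith [hμI.1]⟩
  set Φ' : ℝ → X := fun s => if s ≤ lam then J s else τ' (μ' + (s - lam)) with hΦ'
  have hqgΦ' : IsQuasiGeodesicOn 3 0 (Icc 0 (lam + (D - μ'))) Φ' := by
    refine S6.concat_qg hJg hτ'g hμ'I ?_ ?_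
    · rw [hJl, hz]; simp only [hτ', hμ']; ring_nf
    · intro m hm
      rw [hJ0]
      exact hmin (D - m) ⟨by linarith [hm.2], by linarith [hm.1]⟩
  have hΦ'0 : Φ' 0 = e := by simp only [hΦ', if_pos hlam0]; exact hJ0
  have hΦ'end : Φ' (lam + (D - μ')) = a := by
    by_cases hc : lam + (D - μ') ≤ lam
    · have hμ0 : μ = 0 := by
        have : D ≤ μ' := by linarith
        have := hμ'I.2
        simp only [hμ'] at *
        linarith
      simp only [hΦ', if_pos hc]
      have : J (lam + (D - μ')) = J lam := by simp only [hμ']; rw [hμ0]; ring_nf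
      rw [this, hJl, hz, hμ0, hτ0]
    · simp only [hΦ', if_neg hc]
      simp only [hτ']
      rw [show D - (μ' + (lam + (D - μ') - lam)) = 0 by ring, hτ0]
  -- apply the Morse property of β to Φ
  have hβset : IsMorseSet N' (β '' Icc 0 (dist e b)) := hβ.2
  have hβnear : ∀ s ∈ Icc (0:ℝ) (lam + (D - μ)),
      ∃ w ∈ Icc (0:ℝ) B, dist (Φ s) (β w) ≤ n₀ := by
    intro s hs
    have hend : (0:ℝ) ≤ lam + (D - μ) := by linarith [hμI.2]
    have h0mem : Φ 0 ∈ β '' Icc 0 (dist e b) := by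
      rw [hΦ0]; exact ⟨0, ⟨le_rfl, dist_nonneg⟩, hβ.1.2.1⟩
    have hbmem : Φ (lam + (D - μ)) ∈ β '' Icc 0 (dist e b) := by
      rw [hΦend]; exact ⟨dist e b, ⟨dist_nonneg, le_rfl⟩, hβ.1.2.2⟩
    obtain ⟨g, ⟨w, hwI, rfl⟩, hg⟩ :=
      hβset 3 0 (by norm_num) le_rfl 0 (lam + (D - μ)) hend Φ hqgΦ h0mem hbmem s hs
    exact ⟨w, hwI, hg⟩
  -- apply the Morse property of α to Φ'
  have hαset : IsMorseSet N' (α '' Icc 0 (dist e a)) := hα.2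
  have hαnear : ∀ s ∈ Icc (0:ℝ) (lam + (D - μ')),
      ∃ w ∈ Icc (0:ℝ) A, dist (Φ' s) (α w) ≤ n₀ := by
    intro s hs
    have hend : (0:ℝ) ≤ lam + (D - μ') := by linarith [hμ'I.2]
    have h0mem : Φ' 0 ∈ α '' Icc 0 (dist e a) := by
      rw [hΦ'0]; exact ⟨0, ⟨le_rfl, dist_nonneg⟩, hα.1.2.1⟩
    have hamem : Φ' (lam + (D - μ')) ∈ α '' Icc 0 (dist e a) := by
      rw [hΦ'end]; exact ⟨dist e a, ⟨dist_nonneg, le_rfl⟩, hα.1.2.2⟩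
    obtain ⟨g, ⟨w, hwI, rfl⟩, hg⟩ :=
      hαset 3 0 (by norm_num) le_rfl 0 (lam + (D - μ')) hend Φ' hqgΦ' h0mem hamem s hs
    exact ⟨w, hwI, hg⟩
  -- level estimates for points of β and α
  have hβlevel : ∀ w ∈ Icc (0:ℝ) B, dist e (β w) = w := fun w hw => by
    have := S6.dist_from_start hβ.1.1 (by rwa [← hB])
    rwa [hβ.1.2.1] at this
  have hαlevel : ∀ w ∈ Icc (0:ℝ) A, dist e (α w) = w := fun w hw => by
    have := S6.dist_from_start hα.1.1 (by rwa [← hA])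
    rwa [hα.1.2.1] at this
  -- Claim 1 : gprod e a b ≤ lam + 2 n₀
  have claim1 : gprod e a b ≤ lam + 2 * n₀ := by
    have hzΦ : Φ lam = z := by simp only [hΦ, if_pos le_rfl]; exact hJl
    have hzΦ' : Φ' lam = z := by simp only [hΦ', if_pos le_rfl]; exact hJl
    obtain ⟨w, hwI, hw⟩ := hβnear lam ⟨hlam0, by linarith [hμI.2]⟩
    obtain ⟨v, hvI, hv⟩ := hαnear lam ⟨hlam0, by linarith [hμ'I.2]⟩
    rw [hzΦ] at hw
    rw [hzΦ'] at hv
    have hwlev : |lam - w| ≤ n₀ := by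
      have h1 : |dist e z - dist e (β w)| ≤ dist z (β w) := by
        rw [dist_comm e z, dist_comm e (β w)]; exact abs_dist_sub_le _ _ _
      rw [hβlevel w hwI] at h1
      calc |lam - w| = |dist e z - w| := by rw [hlam]
        _ ≤ dist z (β w) := h1
        _ ≤ n₀ := hw
    have hvlev : |lam - v| ≤ n₀ := by
      have h1 : |dist e z - dist e (α v)| ≤ dist z (α v) := by
        rw [dist_comm e z, dist_comm e (α v)]; exact abs_dist_sub_le _ _ _
      rw [hαlevel v hvI] at h1
      calc |lam - v| = |dist e z - v| := by rw [hlam]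
        _ ≤ dist z (α v) := h1
        _ ≤ n₀ := hv
    have hdaz : dist a z = μ := by
      have := S6.dist_from_start hτg hμI
      rwa [hτ0] at this
    have hdzb : dist z b = D - μ := by
      have := S6.dist_to_end hτg hμI
      rwa [hτD] at this
    have hdav : dist (α v) a = A - v := by
      have := S6.dist_to_end hα.1.1 (show v ∈ Icc (0:ℝ) (dist e a) by rwa [← hA])
      rwa [hα.1.2.2, ← hA] at this
    have hdwb : dist (β w) b = B - w := by
      have := S6.dist_to_end hβ.1.1 (show w ∈ Icc (0:ℝ) (dist e b) by rwa [← hB])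
      rwa [hβ.1.2.2, ← hB] at this
    have h2 : A - v - n₀ ≤ dist a z := by
      have htri := dist_triangle (α v) a z
      have hzv : dist a z = dist z a := dist_comm _ _
      have hvz : dist (α v) z ≤ n₀ := by rw [dist_comm]; exact hv
      have htri2 := dist_triangle (α v) z a
      linarith [hdav]
    have h3 : B - w - n₀ ≤ dist z b := by
      have htri := dist_triangle (β w) z b
      have hwz : dist (β w) z ≤ n₀ := by rw [dist_comm]; exact hw
      linarith [hdwb]
    have hvle : v ≤ lam + n₀ := by
      have := abs_le.mp hvlev; linarith [this.1]
    have hwle : w ≤ lam + n₀ := by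
      have := abs_le.mp hwlev; linarith [this.1]
    have hDlow : A + B - 2 * lam - 4 * n₀ ≤ D := by
      have : D = dist a z + dist z b := by rw [hdaz, hdzb]; ring
      linarith
    unfold gprod
    rw [← hA, ← hB, ← hD]
    linarith
  -- Claim 2 : fellow travel up to lam
  have htlam : t ≤ lam := by linarith
  have htI : t ∈ Icc (0:ℝ) lam := ⟨ht0, htlam⟩
  have hJt : Φ t = J t := by simp only [hΦ]; rw [if_pos htlam]
  have hJt' : Φ' t = J t := by simp only [hΦ']; rw [if_pos htlam]
  obtain ⟨w, hwI, hw⟩ := hβnear t ⟨ht0, by linarith [hμI.2]⟩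
  obtain ⟨v, hvI, hv⟩ := hαnear t ⟨ht0, by linarith [hμ'I.2]⟩
  rw [hJt] at hw
  rw [hJt'] at hv
  have hJlev : dist e (J t) = t := by
    have := S6.dist_from_start hJg (show t ∈ Icc (0:ℝ) (dist e z) from ⟨ht0, htlam⟩)
    rwa [hJ0] at this
  have hwlev : |t - w| ≤ n₀ := by
    have h1 : |dist e (J t) - dist e (β w)| ≤ dist (J t) (β w) := by
      rw [dist_comm e (J t), dist_comm e (β w)]; exact abs_dist_sub_le _ _ _
    rw [hβlevel w hwI, hJlev] at h1
    linarith [hw, h1]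
  have hvlev : |t - v| ≤ n₀ := by
    have h1 : |dist e (J t) - dist e (α v)| ≤ dist (J t) (α v) := by
      rw [dist_comm e (J t), dist_comm e (α v)]; exact abs_dist_sub_le _ _ _
    rw [hαlevel v hvI, hJlev] at h1
    linarith [hv, h1]
  have hβt : dist (β t) (J t) ≤ 2 * n₀ := by
    have hd : dist (β t) (β w) = |t - w| :=
      hβ.1.1.2 t (by rw [← hB]; exact ⟨ht0, le_trans htlam hlamB⟩) w (by rwa [← hB])
    calc dist (β t) (J t) ≤ dist (β t) (β w) + dist (β w) (J t) := dist_triangle _ _ _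
      _ ≤ |t - w| + dist (J t) (β w) := by rw [hd, dist_comm (β w) (J t)]
      _ ≤ n₀ + n₀ := add_le_add hwlev hw
      _ = 2 * n₀ := by ring
  have hαt : dist (α t) (J t) ≤ 2 * n₀ := by
    have hd : dist (α t) (α v) = |t - v| :=
      hα.1.1.2 t (by rw [← hA]; exact ⟨ht0, le_trans htlam hlamA⟩) v (by rwa [← hA])
    calc dist (α t) (J t) ≤ dist (α t) (α v) + dist (α v) (J t) := dist_triangle _ _ _
      _ ≤ |t - v| + dist (J t) (α v) := by rw [hd, dist_comm (α v) (J t)]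
      _ ≤ n₀ + n₀ := add_le_add hvlev hv
      _ = 2 * n₀ := by ring
  calc dist (α t) (β t) ≤ dist (α t) (J t) + dist (J t) (β t) := dist_triangle _ _ _
    _ ≤ 2 * n₀ + 2 * n₀ := add_le_add hαt (by rw [dist_comm]; exact hβt)
    _ = 4 * n₀ := by ring

/-- three-point inequality with slack. -/
lemma three_pt (hX : GeodesicSpace X) {N' : ℝ → ℝ → ℝ} (hN' : IsMorseGauge N')
    {e a b c : X} (ha : a ∈ morseStratum N' e) (hb : b ∈ morseStratum N' e)
    (hc : c ∈ morseStratum N' e) {t : ℝ} (ht0 : 0 ≤ t)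
    (h1 : t + 2 * N' 3 0 ≤ gprod e a b) (h2 : t + 2 * N' 3 0 ≤ gprod e b c) :
    t - 4 * N' 3 0 ≤ gprod e a c := by
  have hn₀ : 0 ≤ N' 3 0 := hN' 3 0 (by norm_num) le_rfl
  obtain ⟨α, hα⟩ := ha
  obtain ⟨β, hβ⟩ := hb
  obtain ⟨γ, hγ⟩ := hc
  have d1 : dist (α t) (β t) ≤ 4 * N' 3 0 := key_main hX hN' hα hβ ht0 h1
  have d2 : dist (β t) (γ t) ≤ 4 * N' 3 0 := by
    refine key_main hX hN' hβ hγ ht0 ?_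
    calc t + 2 * N' 3 0 ≤ gprod e b c := h2
      _ = gprod e b c := rfl
  have htA : t ≤ dist e a := le_trans (by linarith) (gprod_le_left e a b)
  have htC : t ≤ dist e c := by
    have := gprod_le_left e c b
    rw [gprod_comm e c b] at this
    exact le_trans (by linarith) this
  have hta : dist (α t) a = dist e a - t := by
    have := S6.dist_to_end hα.1.1 (show t ∈ Icc (0:ℝ) (dist e a) from ⟨ht0, htA⟩)
    rwa [hα.1.2.2] at this
  have htc : dist (γ t) c = dist e c - t := by
    have := S6.dist_to_end hγ.1.1 (show t ∈ Icc (0:ℝ) (dist e c) from ⟨ht0, htC⟩)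
    rwa [hγ.1.2.2] at this
  have hac : dist a c ≤ (dist e a - t) + 8 * N' 3 0 + (dist e c - t) := by
    have htr1 := dist_triangle a (α t) (γ t)
    have htr2 := dist_triangle a (γ t) c
    have htr3 := dist_triangle (α t) (β t) (γ t)
    have h4 : dist a (α t) = dist (α t) a := dist_comm _ _
    linarith
  unfold gprod
  linarith

/-- four-point inequality with slack. -/
lemma four_pt (hX : GeodesicSpace X) {N' : ℝ → ℝ → ℝ} (hN' : IsMorseGauge N')
    {e a b c d : X} (ha : a ∈ morseStratum N' e) (hb : b ∈ morseStratum N' e)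
    (hc : c ∈ morseStratum N' e) (hd : d ∈ morseStratum N' e) {t : ℝ} (ht0 : 0 ≤ t)
    (h1 : t + 2 * N' 3 0 ≤ gprod e a b) (h2 : t + 2 * N' 3 0 ≤ gprod e b c)
    (h3 : t + 2 * N' 3 0 ≤ gprod e c d) :
    t - 10 * N' 3 0 ≤ gprod e a d := by
  have hn₀ : 0 ≤ N' 3 0 := hN' 3 0 (by norm_num) le_rfl
  rcases le_or_gt t (6 * N' 3 0) with hsm | hbig
  · have := gprod_nonneg e a d
    linarith
  · have hac : (t - 6 * N' 3 0) + 2 * N' 3 0 ≤ gprod e a c := by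
      have := three_pt hX hN' ha hb hc ht0 h1 h2
      linarith
    have hcd : (t - 6 * N' 3 0) + 2 * N' 3 0 ≤ gprod e c d := by linarith
    have := three_pt hX hN' ha hc hd (by linarith) hac hcd
    linarith

/-- `Tendsto` on pairs, unfolded. -/
lemma tendsto_pair_iff {u : ℕ × ℕ → ℝ} :
    Tendsto u atTop atTop ↔ ∀ M : ℝ, ∃ I : ℕ, ∀ n ≥ I, ∀ m ≥ I, M ≤ u (n, m) := by
  rw [tendsto_atTop]
  constructor
  · intro h M
    obtain ⟨p0, hp0⟩ := eventually_atTop.mp (h M)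
    exact ⟨max p0.1 p0.2, fun n hn m hm =>
      hp0 (n, m) ⟨le_trans (le_max_left _ _) hn, le_trans (le_max_right _ _) hm⟩⟩
  · intro h M
    obtain ⟨I, hI⟩ := h M
    refine eventually_atTop.mpr ⟨(I, I), fun p hp => ?_⟩
    have := hI p.1 hp.1 p.2 hp.2
    simpa using this

lemma EquivAtInf.symm' {e : X} {f g : ℕ → X} (h : EquivAtInf e f g) :
    EquivAtInf e g f := by
  unfold EquivAtInf at *
  rw [tendsto_pair_iff] at h ⊢
  intro M
  obtain ⟨I, hI⟩ := h M
  refine ⟨I, fun n hn m hm => ?_⟩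
  have := hI m hm n hn
  simpa [gprod_comm] using this

lemma equiv_trans (hX : GeodesicSpace X) {N' : ℝ → ℝ → ℝ} (hN' : IsMorseGauge N')
    {e : X} {f g h : ℕ → X}
    (hfS : ∀ n, f n ∈ morseStratum N' e) (hgS : ∀ n, g n ∈ morseStratum N' e)
    (hhS : ∀ n, h n ∈ morseStratum N' e)
    (h1 : EquivAtInf e f g) (h2 : EquivAtInf e g h) : EquivAtInf e f h := by
  have hn₀ : 0 ≤ N' 3 0 := hN' 3 0 (by norm_num) le_rfl
  unfold EquivAtInf at *
  rw [tendsto_pair_iff] at h1 h2 ⊢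
  intro M
  obtain ⟨I1, hI1⟩ := h1 (max M 0 + 6 * N' 3 0)
  obtain ⟨I2, hI2⟩ := h2 (max M 0 + 6 * N' 3 0)
  refine ⟨max I1 I2, fun n hn m hm => ?_⟩
  have hb1 : (max M 0 + 4 * N' 3 0) + 2 * N' 3 0 ≤ gprod e (f n) (g (max I1 I2)) := by
    have := hI1 n (le_trans (le_max_left _ _) hn) (max I1 I2) (le_max_left _ _)
    linarith
  have hb2 : (max M 0 + 4 * N' 3 0) + 2 * N' 3 0 ≤ gprod e (g (max I1 I2)) (h m) := by
    have := hI2 (max I1 I2) (le_max_right _ _) m (le_trans (le_max_right I1 I2) hm)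
    linarith
  have h3 := three_pt hX hN' (hfS n) (hgS (max I1 I2)) (hhS m)
    (by positivity : (0:ℝ) ≤ max M 0 + 4 * N' 3 0) hb1 hb2
  calc M ≤ max M 0 := le_max_left _ _
    _ = (max M 0 + 4 * N' 3 0) - 4 * N' 3 0 := by ring
    _ ≤ gprod e (f n) (h m) := h3

lemma equiv_of_eqvGen (hX : GeodesicSpace X) {N' : ℝ → ℝ → ℝ} (hN' : IsMorseGauge N')
    {e : X} {u v : BSeq (morseStratum N' e) e}
    (h : Relation.EqvGen (fun f g : BSeq (morseStratum N' e) e => EquivAtInf e f.1 g.1) u v) :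
    EquivAtInf e u.1 v.1 := by
  induction h with
  | rel x y hxy => exact hxy
  | refl x => exact x.2.2
  | symm x y _ ih => exact EquivAtInf.symm' ih
  | trans x y z _ _ ih1 ih2 => exact equiv_trans hX hN' x.2.1 y.2.1 z.2.1 ih1 ih2

/-- main limit estimate. -/
lemma seqGP_le (hX : GeodesicSpace X) {N' : ℝ → ℝ → ℝ} (hN' : IsMorseGauge N')
    {e : X} {f g f' g' : ℕ → X}
    (hfS : ∀ n, f n ∈ morseStratum N' e) (hgS : ∀ n, g n ∈ morseStratum N' e)
    (hf'S : ∀ n, f' n ∈ morseStratum N' e) (hg'S : ∀ n, g' n ∈ morseStratum N' e)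
    (hff' : EquivAtInf e f f') (hgg' : EquivAtInf e g g') :
    seqGP e f' g' ≤ seqGP e f g + ((32 * N' 3 0 : ℝ) : EReal) := by
  have hn₀ : 0 ≤ N' 3 0 := hN' 3 0 (by norm_num) le_rfl
  by_contra hcon
  push_neg at hcon
  obtain ⟨r, hr1, hr2⟩ := EReal.exists_between_coe_real hcon
  -- hr1 : seqGP e f g + 32 n₀ < r ; hr2 : r < seqGP e f' g'
  have hev : ∀ᶠ p : ℕ × ℕ in atTop,
      (r : EReal) < ((gprod e (f' p.1) (g' p.2) : ℝ) : EReal) :=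
    eventually_lt_of_lt_liminf hr2
  obtain ⟨p0, hp0⟩ := eventually_atTop.mp hev
  have hff'' := tendsto_pair_iff.mp hff' r
  obtain ⟨I1, hI1⟩ := hff''
  have hgg'' := tendsto_pair_iff.mp hgg' r
  obtain ⟨I2, hI2⟩ := hgg''
  set I : ℕ := max (max p0.1 p0.2) (max I1 I2) with hIdef
  have hkey : ∀ n ≥ I, ∀ m ≥ I, r - 12 * N' 3 0 ≤ gprod e (f n) (g m) := by
    intro n hn m hm
    rcases le_or_gt r (12 * N' 3 0) with hsm | hbig
    · linarith [gprod_nonneg e (f n) (g m)]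
    · have hmid : r ≤ gprod e (f' I) (g' I) := by
        have := hp0 (I, I) ⟨le_trans (le_max_left _ _) (le_max_left _ _),
          le_trans (le_max_right _ _) (le_max_left _ _)⟩
        exact le_of_lt (EReal.coe_lt_coe_iff.mp this)
      have hfb : r ≤ gprod e (f n) (f' I) :=
        hI1 n (le_trans (le_trans (le_max_left _ _) (le_max_right _ _)) hn) I
          (le_trans (le_max_left I1 I2) (le_max_right _ _))
      have hgb : r ≤ gprod e (g' I) (g m) := by
        have := hI2 m (le_trans (le_trans (le_max_right I1 I2) (le_max_right _ _)) hm) I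
          (le_trans (le_max_right I1 I2) (le_max_right _ _))
        rwa [gprod_comm] at this
      have h4 := four_pt hX hN' (hfS n) (hf'S I) (hg'S I) (hgS m)
        (by linarith : (0:ℝ) ≤ r - 2 * N' 3 0)
        (by linarith) (by linarith) (by linarith)
      linarith
  have hlow : ((r - 12 * N' 3 0 : ℝ) : EReal) ≤ seqGP e f g := by
    refine le_liminf_of_le (by isBoundedDefault) ?_
    refine eventually_atTop.mpr ⟨(I, I), fun p hp => ?_⟩
    exact EReal.coe_le_coe_iff.mpr (hkey p.1 hp.1 p.2 hp.2)
  have : (r : EReal) ≤ seqGP e f g + ((32 * N' 3 0 : ℝ) : EReal) := by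
    calc (r : EReal) = ((r - 12 * N' 3 0 : ℝ) : EReal) + ((12 * N' 3 0 : ℝ) : EReal) := by
          rw [← EReal.coe_add]; norm_num
      _ ≤ seqGP e f g + ((12 * N' 3 0 : ℝ) : EReal) := add_le_add_left hlow _
      _ ≤ seqGP e f g + ((32 * N' 3 0 : ℝ) : EReal) := by
          refine add_le_add_right (EReal.coe_le_coe_iff.mpr (by linarith)) _
  exact absurd (lt_of_lt_of_le hr1 this) (lt_irrefl _)

lemma stratum_mono {N N' : ℝ → ℝ → ℝ} (hle : ∀ K C : ℝ, N K C ≤ N' K C) (e : X) :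
    morseStratum N e ⊆ morseStratum N' e := by
  rintro y ⟨γ, hg, hm⟩
  exact ⟨γ, hg, fun K C hK hC a b hab σ hσ hσa hσb s hs =>
    (hm K C hK hC a b hab σ hσ hσa hσb s hs).imp fun g hg => ⟨hg.1, hg.2.trans (hle K C)⟩⟩

end S6

end Statement6Aux

set_option maxHeartbeats 1000000 in
/-- for `N ≤ N'` and the induced boundary map `ι`, the Gromov
products satisfy `(x·y)^N ≤ (ιx·ιy)^{N'} ≤ (x·y)^N + 32·N'(3,0)`. -/
theorem statement6 {X : Type*} [MetricSpace X] (hX : GeodesicSpace X) (e : X)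
    (N N' : ℝ → ℝ → ℝ) (hN : IsMorseGauge N) (hN' : IsMorseGauge N')
    (hle : ∀ K C : ℝ, N K C ≤ N' K C)
    (ι : SeqBoundary (morseStratum N e) e → SeqBoundary (morseStratum N' e) e)
    (hι : ∀ (f : BSeq (morseStratum N e) e) (g : BSeq (morseStratum N' e) e),
        (∀ n, g.1 n = f.1 n) → ι (SeqBoundary.mk f) = SeqBoundary.mk g) :
    ∀ ξ η : SeqBoundary (morseStratum N e) e,
      bGP (morseStratum N e) e ξ η ≤ bGP (morseStratum N' e) e (ι ξ) (ι η) ∧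
      bGP (morseStratum N' e) e (ι ξ) (ι η) ≤
        bGP (morseStratum N e) e ξ η + ((32 * N' 3 0 : ℝ) : EReal) := by
  intro ξ η
  classical
  have hmono : morseStratum N e ⊆ morseStratum N' e := S6.stratum_mono hle e
  -- lift of sequences from the N-stratum to the N'-stratum
  let lift : BSeq (morseStratum N e) e → BSeq (morseStratum N' e) e :=
    fun f => ⟨f.1, fun n => hmono (f.2.1 n), f.2.2⟩
  have hlift : ∀ f : BSeq (morseStratum N e) e,
      ι (SeqBoundary.mk f) = SeqBoundary.mk (lift f) :=
    fun f => hι f (lift f) (fun _ => rfl)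
  constructor
  · refine sSup_le ?_
    rintro r ⟨f, g, hf, hg, rfl⟩
    refine le_sSup ⟨lift f, lift g, ?_, ?_, rfl⟩
    · rw [← hf, hlift f]
    · rw [← hg, hlift g]
  · refine sSup_le ?_
    rintro r ⟨f', g', hf', hg', rfl⟩
    obtain ⟨f₀, hf₀⟩ := Quot.exists_rep ξ
    obtain ⟨g₀, hg₀⟩ := Quot.exists_rep η
    have hmkf₀ : SeqBoundary.mk f₀ = ξ := hf₀
    have hmkg₀ : SeqBoundary.mk g₀ = η := hg₀
    have hf'' : SeqBoundary.mk (lift f₀) = SeqBoundary.mk f' := by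
      rw [← hlift f₀, hmkf₀, ← hf']
    have hg'' : SeqBoundary.mk (lift g₀) = SeqBoundary.mk g' := by
      rw [← hlift g₀, hmkg₀, ← hg']
    have hEqF : Relation.EqvGen
        (fun f g : BSeq (morseStratum N' e) e => EquivAtInf e f.1 g.1) (lift f₀) f' :=
      Quot.eqvGen_exact hf''
    have hEqG : Relation.EqvGen
        (fun f g : BSeq (morseStratum N' e) e => EquivAtInf e f.1 g.1) (lift g₀) g' :=
      Quot.eqvGen_exact hg''
    have hEquivF0 := S6.equiv_of_eqvGen hX hN' hEqF
    have hEquivG0 := S6.equiv_of_eqvGen hX hN' hEqG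
    have hEquivF : EquivAtInf e f₀.1 f'.1 := hEquivF0
    have hEquivG : EquivAtInf e g₀.1 g'.1 := hEquivG0
    have hkey : seqGP e f'.1 g'.1 ≤ seqGP e f₀.1 g₀.1 + ((32 * N' 3 0 : ℝ) : EReal) :=
      S6.seqGP_le hX hN' (fun n => hmono (f₀.2.1 n)) (fun n => hmono (g₀.2.1 n))
        f'.2.1 g'.2.1 hEquivF hEquivG
    have hmem : seqGP e f₀.1 g₀.1 ≤ bGP (morseStratum N e) e ξ η :=
      le_sSup ⟨f₀, g₀, hmkf₀, hmkg₀, rfl⟩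
    exact hkey.trans (add_le_add_left hmem _)
end
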